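/- arXiv:1904.08423 — 9 statements merged into one kernel-verified Lean document; each statement's English description precedes it below -/
import Mathlib

section
/- (Strong maximum principle for scalar elliptic operators, nonnegative zeroth-order coefficient.) Let n ≥ 1 and let U ⊆ ℝⁿ be open and connected. Let L be an elliptic operator on U with continuous coefficients a^{αβ}, b^α, c, and assume c(x) ≥ 0 for all x ∈ U. Let u : U → ℝ be twice continuously differentiable on U with (Lu)(x) ≤ 0 for all x ∈ U. If u attains its supremum over U at some point x₀ ∈ U and u(x₀) ≥ 0, then u is constant on U. -/
/-- The second-order linear differential operator
`(Lu)(x) = -∑_{α,β} a^{αβ}(x) ∂_α ∂_β u(x) + ∑_α b^α(x) ∂_α u(x) + c(x) u(x)`. -/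
noncomputable def ellOp {n : ℕ}
    (a : (Fin n → ℝ) → Fin n → Fin n → ℝ)
    (b : (Fin n → ℝ) → Fin n → ℝ)
    (c : (Fin n → ℝ) → ℝ)
    (u : (Fin n → ℝ) → ℝ) (x : Fin n → ℝ) : ℝ :=
  -(∑ α : Fin n, ∑ β : Fin n,
      a x α β * fderiv ℝ (fun y => fderiv ℝ u y (Pi.single β 1)) x (Pi.single α 1))
    + (∑ α : Fin n, b x α * fderiv ℝ u x (Pi.single α 1)) + c x * u x

open Topology Filter Set
open scoped Matrix

variable {n : ℕ}



lemma pi_sum_single (v : Fin n → ℝ) :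
    ∑ α, v α • (Pi.single α (1:ℝ) : Fin n → ℝ) = v := by
  funext i
  simp [Finset.sum_apply, Pi.single_apply]

lemma clm_apply_eq_sum (φ : (Fin n → ℝ) →L[ℝ] ℝ) (v : Fin n → ℝ) :
    φ v = ∑ α, v α * φ (Pi.single α 1) := by
  conv_lhs => rw [← pi_sum_single v]
  rw [map_sum]
  simp [smul_eq_mul]

lemma clm2_apply_eq_sum (Φ : (Fin n → ℝ) →L[ℝ] ((Fin n → ℝ) →L[ℝ] ℝ)) (v w : Fin n → ℝ) :
    Φ v w = ∑ α, ∑ β, v α * w β * (Φ (Pi.single α 1) (Pi.single β 1)) := by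
  conv_lhs => rw [← pi_sum_single v]
  rw [map_sum, ContinuousLinearMap.sum_apply]
  refine Finset.sum_congr rfl fun α _ => ?_
  rw [map_smul, ContinuousLinearMap.smul_apply, smul_eq_mul,
    clm_apply_eq_sum (Φ (Pi.single α 1)) w, Finset.mul_sum]
  exact Finset.sum_congr rfl fun β _ => by ring

open scoped MatrixOrder in
lemma exists_sqrt_entries (A : Fin n → Fin n → ℝ)
    (hsymm : ∀ α β, A α β = A β α)
    (hpos : ∀ v : Fin n → ℝ, v ≠ 0 → 0 < ∑ α, ∑ β, A α β * v α * v β) :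
    ∃ B : Fin n → Fin n → ℝ, ∀ α β, A α β = ∑ k, B k α * B k β := by
  set A' : Matrix (Fin n) (Fin n) ℝ := Matrix.of A with hA'
  have hherm : A'.IsHermitian := by
    ext i j
    simpa [Matrix.conjTranspose_apply, hA'] using hsymm j i
  have hps : A'.PosSemidef := by
    refine Matrix.PosSemidef.of_dotProduct_mulVec_nonneg hherm fun x => ?_
    show 0 ≤ dotProduct (star x) (A'.mulVec x)
    have hstar : (star x : Fin n → ℝ) = x := rfl
    have heq : dotProduct x (A'.mulVec x) = ∑ α, ∑ β, A α β * x α * x β := by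
      simp only [dotProduct, Matrix.mulVec, Finset.mul_sum]
      refine Finset.sum_congr rfl fun α _ => Finset.sum_congr rfl fun β _ => ?_
      simp only [hA', Matrix.of_apply]; ring
    rw [hstar, heq]
    rcases eq_or_ne x 0 with rfl | hx
    · simp
    · exact (hpos x hx).le
  obtain ⟨B, hB⟩ :=
    CStarAlgebra.nonneg_iff_eq_star_mul_self.mp hps.nonneg
  refine ⟨fun k α => B k α, fun α β => ?_⟩
  calc A α β = (star B * B) α β := by rw [← hB]; rfl
    _ = ∑ k, B k α * B k β := by simp [Matrix.mul_apply, Matrix.star_apply]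

lemma trace_form_nonpos (A H : Fin n → Fin n → ℝ)
    (hsymm : ∀ α β, A α β = A β α)
    (hpos : ∀ v : Fin n → ℝ, v ≠ 0 → 0 < ∑ α, ∑ β, A α β * v α * v β)
    (hH : ∀ v : Fin n → ℝ, ∑ α, ∑ β, v α * v β * H α β ≤ 0) :
    ∑ α, ∑ β, A α β * H α β ≤ 0 := by
  obtain ⟨B, hB⟩ := exists_sqrt_entries A hsymm hpos
  calc ∑ α, ∑ β, A α β * H α β
      = ∑ α, ∑ β, ∑ k, B k α * B k β * H α β := by
        refine Finset.sum_congr rfl fun α _ => Finset.sum_congr rfl fun β _ => ?_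
        rw [hB α β, Finset.sum_mul]
    _ = ∑ α, ∑ k, ∑ β, B k α * B k β * H α β :=
        Finset.sum_congr rfl fun α _ => Finset.sum_comm
    _ = ∑ k, ∑ α, ∑ β, B k α * B k β * H α β := Finset.sum_comm
    _ ≤ 0 := Finset.sum_nonpos fun k _ => hH (B k)


lemma hasFDerivAt_fderiv_apply {U : Set (Fin n → ℝ)} (hU : IsOpen U)
    {w : (Fin n → ℝ) → ℝ} (hw : ContDiffOn ℝ 2 w U) {z : Fin n → ℝ} (hz : z ∈ U)
    (v : Fin n → ℝ) :
    HasFDerivAt (fun y => fderiv ℝ w y v) ((fderiv ℝ (fderiv ℝ w) z).flip v) z := by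
  have h2 : ContDiffOn ℝ 1 (fderiv ℝ w) U :=
    hw.fderiv_of_isOpen hU (by norm_num)
  have hc : DifferentiableAt ℝ (fderiv ℝ w) z :=
    (h2.differentiableOn one_ne_zero).differentiableAt (hU.mem_nhds hz)
  have := hc.hasFDerivAt.clm_apply (hasFDerivAt_const v z)
  simpa using this

lemma localmax_dirderiv2_nonpos {U : Set (Fin n → ℝ)} (hU : IsOpen U)
    {w : (Fin n → ℝ) → ℝ} (hw : ContDiffOn ℝ 2 w U) {z : Fin n → ℝ} (hz : z ∈ U)
    (hmax : IsLocalMax w z) (v : Fin n → ℝ) :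
    fderiv ℝ (fderiv ℝ w) z v v ≤ 0 := by
  rcases eq_or_ne v 0 with rfl | hv0
  · simp
  have hv : (0:ℝ) < ‖v‖ := norm_pos_iff.2 hv0
  by_contra hD'
  push_neg at hD'
  set D := fderiv ℝ (fderiv ℝ w) z v v with hDdef
  obtain ⟨ρ, hρ, hball⟩ : ∃ ρ > 0, ∀ ⦃y⦄, dist y z < ρ → y ∈ U ∧ w y ≤ w z :=
    Metric.eventually_nhds_iff.1 ((hU.eventually_mem hz).and hmax)
  set ℓ : ℝ → (Fin n → ℝ) := fun t => z + t • v with hℓdef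
  have hℓ : ∀ t : ℝ, HasDerivAt ℓ v t := by
    intro t
    simpa [hℓdef] using ((hasDerivAt_id t).smul_const v).const_add z
  have hℓ0 : ℓ 0 = z := by simp [hℓdef]
  have hmem : ∀ t : ℝ, |t| * ‖v‖ < ρ → ℓ t ∈ U ∧ w (ℓ t) ≤ w z := by
    intro t ht
    apply hball
    have : dist (ℓ t) z = |t| * ‖v‖ := by
      simp [hℓdef, dist_eq_norm, norm_smul, abs_mul]
    rwa [this]
  have hdiffU : ∀ y ∈ U, DifferentiableAt ℝ w y := fun y hy =>
    (hw.differentiableOn (by norm_num)).differentiableAt (hU.mem_nhds hy)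
  set g : ℝ → ℝ := fun t => w (ℓ t) with hgdef
  set g' : ℝ → ℝ := fun t => fderiv ℝ w (ℓ t) v with hg'def
  have hgdiff : ∀ t : ℝ, ℓ t ∈ U → HasDerivAt g (g' t) t := fun t ht =>
    (hdiffU _ ht).hasFDerivAt.comp_hasDerivAt t (hℓ t)
  have hg'0 : HasDerivAt g' D 0 := by
    have h1 := (hasFDerivAt_fderiv_apply hU hw hz v)
    have h2 : HasFDerivAt (fun y => fderiv ℝ w y v)
        ((fderiv ℝ (fderiv ℝ w) z).flip v) (ℓ 0) := by rwa [hℓ0]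
    have := h2.comp_hasDerivAt 0 (hℓ 0)
    exact this
  have hg'z : g' 0 = 0 := by
    simp [hg'def, hℓ0, hmax.fderiv_eq_zero]
  have hslope := hasDerivAt_iff_tendsto_slope.1 hg'0
  have hev : ∀ᶠ t in 𝓝[≠] (0:ℝ), 0 < slope g' 0 t :=
    hslope.eventually (eventually_gt_nhds hD')
  rw [eventually_nhdsWithin_iff] at hev
  obtain ⟨ε, hε, hεs⟩ := Metric.eventually_nhds_iff.1 hev
  set η : ℝ := ρ / (‖v‖ + 1) with hηdef
  have hη : 0 < η := div_pos hρ (by linarith)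
  set τ : ℝ := min ε η / 2 with hτdef
  have hτ : 0 < τ := by positivity
  have hτε : τ < ε := by
    have h1 : min ε η ≤ ε := min_le_left _ _
    have h2 : τ ≤ ε / 2 := by rw [hτdef]; linarith
    linarith
  have hτη : τ < η := by
    have h1 : min ε η ≤ η := min_le_right _ _
    have h2 : τ ≤ η / 2 := by rw [hτdef]; linarith
    linarith
  have hstay : ∀ t : ℝ, |t| ≤ τ → ℓ t ∈ U ∧ w (ℓ t) ≤ w z := by
    intro t ht
    apply hmem
    have h1 : |t| * ‖v‖ ≤ τ * ‖v‖ := by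
      apply mul_le_mul_of_nonneg_right ht (norm_nonneg v)
    have h2 : τ * ‖v‖ < η * (‖v‖ + 1) := by
      have := mul_lt_mul_of_pos_right hτη (show (0:ℝ) < ‖v‖ + 1 by linarith)
      have h3 : τ * ‖v‖ ≤ τ * (‖v‖ + 1) := by nlinarith
      linarith
    have h4 : η * (‖v‖ + 1) = ρ := by
      rw [hηdef]; field_simp
    linarith
  have hmono : StrictMonoOn g (Set.Icc 0 τ) := by
    apply strictMonoOn_of_deriv_pos (convex_Icc 0 τ)
    · intro t ht
      have h1 : |t| ≤ τ := by
        rw [abs_le]; exact ⟨by linarith [ht.1], ht.2⟩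
      exact ((hgdiff t (hstay t h1).1).differentiableAt).continuousAt.continuousWithinAt
    · intro t ht
      rw [interior_Icc] at ht
      have h1 : |t| ≤ τ := by
        rw [abs_le]; exact ⟨by linarith [ht.1], by linarith [ht.2]⟩
      have hder := hgdiff t (hstay t h1).1
      rw [hder.deriv]
      have hslopet : 0 < slope g' 0 t := by
        apply hεs
        · rw [Real.dist_eq, sub_zero]
          calc |t| ≤ τ := h1
            _ < ε := hτε
        · exact Set.mem_compl_singleton_iff.2 (ne_of_gt ht.1)
      have : slope g' 0 t = g' t / t := by
        simp [slope_def_field, hg'z]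
      rw [this] at hslopet
      have := mul_pos hslopet ht.1
      rwa [div_mul_cancel₀] at this
      exact ne_of_gt ht.1
  have hlt : g 0 < g τ :=
    hmono (Set.mem_Icc.2 ⟨le_refl 0, hτ.le⟩) (Set.mem_Icc.2 ⟨hτ.le, le_refl τ⟩) hτ
  have hle : g τ ≤ g 0 := by
    have h1 : |τ| ≤ τ := le_of_eq (abs_of_pos hτ)
    show w (ℓ τ) ≤ w (ℓ 0)
    rw [hℓ0]
    exact (hstay τ h1).2
  linarith
lemma interior_max_hess {U : Set (Fin n → ℝ)} (hU : IsOpen U)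
    {w : (Fin n → ℝ) → ℝ} (hw : ContDiffOn ℝ 2 w U) {z : Fin n → ℝ} (hz : z ∈ U)
    (hmax : IsLocalMax w z) (A : Fin n → Fin n → ℝ)
    (hsymm : ∀ α β, A α β = A β α)
    (hpos : ∀ v : Fin n → ℝ, v ≠ 0 → 0 < ∑ α, ∑ β, A α β * v α * v β) :
    ∑ α, ∑ β, A α β *
      (fderiv ℝ (fun y => fderiv ℝ w y (Pi.single β 1)) z (Pi.single α 1)) ≤ 0 := by
  set Φ := fderiv ℝ (fderiv ℝ w) z with hΦdef
  have hH : ∀ α β : Fin n, fderiv ℝ (fun y => fderiv ℝ w y (Pi.single β 1)) z (Pi.single α 1)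
      = Φ (Pi.single α 1) (Pi.single β 1) := by
    intro α β
    rw [(hasFDerivAt_fderiv_apply hU hw hz (Pi.single β 1)).fderiv]
    rfl
  have key : ∀ v : Fin n → ℝ,
      ∑ α, ∑ β, v α * v β * (Φ (Pi.single α 1) (Pi.single β 1)) ≤ 0 := by
    intro v
    rw [← clm2_apply_eq_sum]
    exact localmax_dirderiv2_nonpos hU hw hz hmax v
  simp only [hH]
  exact trace_form_nonpos A _ hsymm hpos key



/-- squared euclidean distance to `p` -/
noncomputable def Qf (p : Fin n → ℝ) (x : Fin n → ℝ) : ℝ := ∑ i, (x i - p i)^2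

/-- derivative of `Qf` -/
noncomputable def LQ (p x : Fin n → ℝ) : (Fin n → ℝ) →L[ℝ] ℝ :=
  ∑ i, (2*(x i - p i)) • (ContinuousLinearMap.proj i : (Fin n → ℝ) →L[ℝ] ℝ)

lemma LQ_apply (p x h : Fin n → ℝ) : LQ p x h = ∑ i, 2*(x i - p i) * h i := by
  simp [LQ, ContinuousLinearMap.sum_apply]

lemma LQ_single (p x : Fin n → ℝ) (β : Fin n) :
    LQ p x (Pi.single β 1) = 2*(x β - p β) := by
  rw [LQ_apply]
  rw [Finset.sum_eq_single β]
  · simp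
  · intro i _ hi; simp [Pi.single_apply, hi]
  · intro h; exact absurd (Finset.mem_univ β) h

lemma hasFDerivAt_Qf (p x : Fin n → ℝ) : HasFDerivAt (Qf p) (LQ p x) x := by
  have : ∀ i : Fin n, HasFDerivAt (fun y : Fin n → ℝ => (y i - p i)^2)
      ((2*(x i - p i)) • (ContinuousLinearMap.proj i : (Fin n → ℝ) →L[ℝ] ℝ)) x := by
    intro i
    have h0 : HasFDerivAt (fun y : Fin n → ℝ => y i)
        (ContinuousLinearMap.proj i : (Fin n → ℝ) →L[ℝ] ℝ) x :=
      (ContinuousLinearMap.proj i : (Fin n → ℝ) →L[ℝ] ℝ).hasFDerivAt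
    have h1 : HasFDerivAt (fun y : Fin n → ℝ => y i - p i)
        (ContinuousLinearMap.proj i : (Fin n → ℝ) →L[ℝ] ℝ) x :=
      h0.sub_const (p i)
    have h2 := h1.fun_mul h1
    have h3 : (fun y : Fin n → ℝ => (y i - p i)^2) = fun y => (y i - p i) * (y i - p i) := by
      funext y; ring
    rw [h3]
    convert h2 using 1
    all_goals try rfl
    ext v
    simp [ContinuousLinearMap.smul_apply]
    ring
  have hsum := HasFDerivAt.fun_sum (fun i (_ : i ∈ Finset.univ) => this i)
  exact hsum

lemma contDiff_Qf (p : Fin n → ℝ) : ContDiff ℝ 2 (Qf p) := by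
  apply ContDiff.sum
  intro i _
  exact ((ContinuousLinearMap.proj i :
    (Fin n → ℝ) →L[ℝ] ℝ).contDiff.sub contDiff_const).pow 2

/-- the Hopf barrier -/
noncomputable def bar (p : Fin n → ℝ) (lam r2 : ℝ) (x : Fin n → ℝ) : ℝ :=
  Real.exp (-lam * Qf p x) - Real.exp (-lam * r2)

lemma contDiff_bar (p : Fin n → ℝ) (lam r2 : ℝ) : ContDiff ℝ 2 (bar p lam r2) :=
  (Real.contDiff_exp.of_le le_top |>.comp (contDiff_const.mul (contDiff_Qf p))).sub
    contDiff_const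

lemma hasFDerivAt_bar (p : Fin n → ℝ) (lam r2 : ℝ) (x : Fin n → ℝ) :
    HasFDerivAt (bar p lam r2)
      ((Real.exp (-lam * Qf p x) * (-lam)) • LQ p x) x := by
  have h1 : HasFDerivAt (fun y => -lam * Qf p y) ((-lam) • LQ p x) x :=
    (hasFDerivAt_Qf p x).const_mul (-lam)
  have h2 := h1.exp
  have h3 := h2.sub_const (Real.exp (-lam * r2))
  have h4 : (Real.exp (-lam * Qf p x) * (-lam)) • LQ p x
      = Real.exp (-lam * Qf p x) • ((-lam) • LQ p x) := by
    rw [smul_smul]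
  rw [h4]
  exact h3

lemma fderiv_bar_apply (p : Fin n → ℝ) (lam r2 : ℝ) (x h : Fin n → ℝ) :
    fderiv ℝ (bar p lam r2) x h
      = Real.exp (-lam * Qf p x) * (-lam) * LQ p x h := by
  rw [(hasFDerivAt_bar p lam r2 x).fderiv]
  simp [ContinuousLinearMap.smul_apply, mul_assoc]

lemma fderiv_bar_fun_eq (p : Fin n → ℝ) (lam r2 : ℝ) (β : Fin n) :
    (fun y => fderiv ℝ (bar p lam r2) y (Pi.single β 1))
      = fun y => (-2*lam) * ((y β - p β) * Real.exp (-lam * Qf p y)) := by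
  funext y
  rw [fderiv_bar_apply, LQ_single]
  ring

lemma bar_second (p : Fin n → ℝ) (lam r2 : ℝ) (x : Fin n → ℝ) (α β : Fin n) :
    fderiv ℝ (fun y => fderiv ℝ (bar p lam r2) y (Pi.single β 1)) x (Pi.single α 1)
      = Real.exp (-lam * Qf p x) *
          (4*lam^2*(x α - p α)*(x β - p β) - (if α = β then 2*lam else 0)) := by
  rw [fderiv_bar_fun_eq p lam r2 β]
  have hf1 : HasFDerivAt (fun y : Fin n → ℝ => y β - p β)
      (ContinuousLinearMap.proj β : (Fin n → ℝ) →L[ℝ] ℝ) x := by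
    have h0 : HasFDerivAt (fun y : Fin n → ℝ => y β)
        (ContinuousLinearMap.proj β : (Fin n → ℝ) →L[ℝ] ℝ) x :=
      (ContinuousLinearMap.proj β : (Fin n → ℝ) →L[ℝ] ℝ).hasFDerivAt
    exact h0.sub_const (p β)
  have hf2 : HasFDerivAt (fun y => Real.exp (-lam * Qf p y))
      (Real.exp (-lam * Qf p x) • ((-lam) • LQ p x)) x :=
    ((hasFDerivAt_Qf p x).const_mul (-lam)).exp
  have hmul := hf1.fun_mul hf2
  have hg := hmul.const_mul (-2*lam)
  rw [hg.fderiv]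
  have happ1 : (ContinuousLinearMap.proj β : (Fin n → ℝ) →L[ℝ] ℝ) (Pi.single α 1)
      = (if α = β then (1:ℝ) else 0) := by
    simp [Pi.single_apply, eq_comm]
  simp only [ContinuousLinearMap.smul_apply, ContinuousLinearMap.add_apply,
    ContinuousLinearMap.coe_smul', Pi.smul_apply, smul_eq_mul, LQ_single, happ1]
  by_cases hab : α = β
  · subst hab; simp; ring
  · simp [hab]; ring
lemma sum2_expand (eps : ℝ) (F G : Fin n → Fin n → ℝ) :
    (∑ α, ∑ β, (F α β + eps * G α β))
      = (∑ α, ∑ β, F α β) + eps * (∑ α, ∑ β, G α β) := by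
  rw [Finset.mul_sum, ← Finset.sum_add_distrib]
  refine Finset.sum_congr rfl fun α _ => ?_
  rw [Finset.mul_sum, ← Finset.sum_add_distrib]

lemma sum1_expand (eps : ℝ) (F G : Fin n → ℝ) :
    (∑ α, (F α + eps * G α)) = (∑ α, F α) + eps * (∑ α, G α) := by
  rw [Finset.mul_sum, ← Finset.sum_add_distrib]

lemma ellOp_combo {U : Set (Fin n → ℝ)} (hU : IsOpen U)
    (a : (Fin n → ℝ) → Fin n → Fin n → ℝ) (b : (Fin n → ℝ) → Fin n → ℝ)
    (c : (Fin n → ℝ) → ℝ) {u v : (Fin n → ℝ) → ℝ}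
    (hu : ContDiffOn ℝ 2 u U) (hv : ContDiff ℝ 2 v) (eps k : ℝ)
    {x : Fin n → ℝ} (hx : x ∈ U) :
    ellOp a b c (fun y => u y + eps * v y + k) x
      = ellOp a b c u x + eps * ellOp a b c v x + c x * k := by
  set w := fun y => u y + eps * v y + k with hwdef
  have hdu : ∀ y ∈ U, DifferentiableAt ℝ u y := fun y hy =>
    (hu.differentiableOn (by norm_num)).differentiableAt (hU.mem_nhds hy)
  have hdv : ∀ y : Fin n → ℝ, DifferentiableAt ℝ v y := fun y =>
    (hv.differentiable (by norm_num)).differentiableAt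
  have hDw : ∀ y ∈ U, fderiv ℝ w y = fderiv ℝ u y + eps • fderiv ℝ v y := by
    intro y hy
    exact (((hdu y hy).hasFDerivAt.add
      ((hdv y).hasFDerivAt.const_mul eps)).add_const k).fderiv
  have hDwβ : ∀ β : Fin n, fderiv ℝ w x (Pi.single β 1)
      = fderiv ℝ u x (Pi.single β 1) + eps * fderiv ℝ v x (Pi.single β 1) := by
    intro β; rw [hDw x hx]; simp
  have hHw : ∀ α β : Fin n,
      fderiv ℝ (fun y => fderiv ℝ w y (Pi.single β 1)) x (Pi.single α 1)
      = fderiv ℝ (fun y => fderiv ℝ u y (Pi.single β 1)) x (Pi.single α 1)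
        + eps * fderiv ℝ (fun y => fderiv ℝ v y (Pi.single β 1)) x (Pi.single α 1) := by
    intro α β
    have HU := hasFDerivAt_fderiv_apply hU hu hx (Pi.single β 1)
    have HV := hasFDerivAt_fderiv_apply isOpen_univ hv.contDiffOn
      (Set.mem_univ x) (Pi.single β 1)
    have heq : (fun y => fderiv ℝ w y (Pi.single β 1))
        =ᶠ[𝓝 x] (fun y => fderiv ℝ u y (Pi.single β 1)
            + eps * fderiv ℝ v y (Pi.single β 1)) := by
      filter_upwards [hU.mem_nhds hx] with y hy
      rw [hDw y hy]; simp
    have Hsum := HU.fun_add (HV.const_mul eps)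
    rw [heq.fderiv_eq, Hsum.fderiv]
    simp [HU.fderiv, HV.fderiv]
  simp only [ellOp]
  have e1 : ∑ α, ∑ β, a x α β *
        fderiv ℝ (fun y => fderiv ℝ w y (Pi.single β 1)) x (Pi.single α 1)
      = (∑ α, ∑ β, a x α β *
          fderiv ℝ (fun y => fderiv ℝ u y (Pi.single β 1)) x (Pi.single α 1))
        + eps * (∑ α, ∑ β, a x α β *
          fderiv ℝ (fun y => fderiv ℝ v y (Pi.single β 1)) x (Pi.single α 1)) := by
    rw [← sum2_expand]
    refine Finset.sum_congr rfl fun α _ => Finset.sum_congr rfl fun β _ => ?_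
    rw [hHw α β]; ring
  have e2 : ∑ α, b x α * fderiv ℝ w x (Pi.single α 1)
      = (∑ α, b x α * fderiv ℝ u x (Pi.single α 1))
        + eps * (∑ α, b x α * fderiv ℝ v x (Pi.single α 1)) := by
    rw [← sum1_expand]
    refine Finset.sum_congr rfl fun α _ => ?_
    rw [hDwβ α]; ring
  rw [e1, e2]
  have e3 : w x = u x + eps * v x + k := rfl
  rw [e3]
  ring

set_option maxHeartbeats 1000000 in
lemma ellOp_bar_lt (a : (Fin n → ℝ) → Fin n → Fin n → ℝ)
    (b : (Fin n → ℝ) → Fin n → ℝ) (c : (Fin n → ℝ) → ℝ)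
    (p : Fin n → ℝ) (lam r2 θ C1 C2 C3 : ℝ) (x : Fin n → ℝ)
    (hθ : 0 < θ)
    (hF : θ ≤ ∑ α, ∑ β, a x α β * (x α - p α) * (x β - p β))
    (hT : |∑ α, a x α α| ≤ C1)
    (hG : |∑ α, b x α * (x α - p α)| ≤ C2)
    (hc0 : 0 ≤ c x) (hc : c x ≤ C3)
    (hlam1 : 1 ≤ lam) (hlam2 : C1 + C2 + C3 + 1 ≤ lam * θ) :
    ellOp a b c (bar p lam r2) x < 0 := by
  set E := Real.exp (-lam * Qf p x) with hE
  have hEpos : 0 < E := Real.exp_pos _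
  set S := ∑ α, ∑ β, a x α β * (x α - p α) * (x β - p β) with hS
  set T := ∑ α, a x α α with hT'
  set G := ∑ α, b x α * (x α - p α) with hG'
  have hP2 : ∑ α, ∑ β, a x α β *
        fderiv ℝ (fun y => fderiv ℝ (bar p lam r2) y (Pi.single β 1)) x (Pi.single α 1)
      = E * (4*lam^2 * S - 2*lam * T) := by
    have inner : ∀ α : Fin n,
        ∑ β, a x α β * (E * (4*lam^2*(x α - p α)*(x β - p β) - (if α = β then 2*lam else 0)))
        = (∑ β, 4*lam^2*E*(a x α β * (x α - p α) * (x β - p β))) - 2*lam*E*(a x α α) := by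
      intro α
      have hterm : ∀ β : Fin n,
          a x α β * (E * (4*lam^2*(x α - p α)*(x β - p β) - (if α = β then 2*lam else 0)))
          = 4*lam^2*E*(a x α β * (x α - p α) * (x β - p β))
            - (if α = β then 2*lam*E*(a x α β) else 0) := by
        intro β
        by_cases h : α = β
        · simp only [if_pos h]; ring
        · simp only [if_neg h]; ring
      rw [Finset.sum_congr rfl fun β _ => hterm β, Finset.sum_sub_distrib]
      congr 1
      rw [Finset.sum_ite_eq, if_pos (Finset.mem_univ α)]
    calc ∑ α, ∑ β, a x α β *
          fderiv ℝ (fun y => fderiv ℝ (bar p lam r2) y (Pi.single β 1)) x (Pi.single α 1)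
        = ∑ α, ∑ β, a x α β *
            (E * (4*lam^2*(x α - p α)*(x β - p β) - (if α = β then 2*lam else 0))) := by
          refine Finset.sum_congr rfl fun α _ => Finset.sum_congr rfl fun β _ => ?_
          rw [bar_second]
      _ = ∑ α, ((∑ β, 4*lam^2*E*(a x α β * (x α - p α) * (x β - p β))) - 2*lam*E*(a x α α)) :=
          Finset.sum_congr rfl fun α _ => inner α
      _ = E * (4*lam^2 * S - 2*lam * T) := by
          rw [Finset.sum_sub_distrib]
          simp only [← Finset.mul_sum]
          rw [hS, hT']
          ring
  have hP1 : ∑ α, b x α * fderiv ℝ (bar p lam r2) x (Pi.single α 1)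
      = E * (-2*lam) * G := by
    calc ∑ α, b x α * fderiv ℝ (bar p lam r2) x (Pi.single α 1)
        = ∑ α, E * (-2*lam) * (b x α * (x α - p α)) := by
          refine Finset.sum_congr rfl fun α _ => ?_
          rw [fderiv_bar_apply, LQ_single]
          ring
      _ = E * (-2*lam) * G := by rw [← Finset.mul_sum, hG']
  have hbarle : bar p lam r2 x ≤ E := by
    rw [bar, ← hE]
    have := Real.exp_nonneg (-lam * r2)
    linarith
  have h1 : c x * bar p lam r2 x ≤ C3 * E :=
    calc c x * bar p lam r2 x ≤ c x * E := mul_le_mul_of_nonneg_left hbarle hc0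
      _ ≤ C3 * E := mul_le_mul_of_nonneg_right (hc.trans le_rfl) hEpos.le
  have hC1 : 0 ≤ C1 := (abs_nonneg _).trans hT
  have hC2 : 0 ≤ C2 := (abs_nonneg _).trans hG
  have hC3 : 0 ≤ C3 := hc0.trans hc
  have hTle := abs_le.1 hT
  have hGle := abs_le.1 hG
  have hlam0 : 0 < lam := lt_of_lt_of_le one_pos hlam1
  have hbracket : -(4*lam^2 * S - 2*lam * T) + (-2*lam)*G
      ≤ -(4*lam^2)*θ + 2*lam*C1 + 2*lam*C2 := by
    have m1 : 2*lam*T ≤ 2*lam*C1 := by nlinarith [hTle.2]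
    have m2 : (-2*lam)*G ≤ 2*lam*C2 := by nlinarith [hGle.1]
    have m3 : -(4*lam^2*S) ≤ -(4*lam^2)*θ := by nlinarith [hF, sq_nonneg lam]
    linarith
  have hkey : -(4*lam^2)*θ + 2*lam*C1 + 2*lam*C2 + C3 < 0 := by
    nlinarith [hlam2, hlam1, hC1, hC2, hC3, hθ]
  simp only [ellOp]
  rw [hP2, hP1]
  have hfin : -(E * (4*lam^2 * S - 2*lam * T)) + E * (-2*lam) * G + c x * bar p lam r2 x
      ≤ E * (-(4*lam^2)*θ + 2*lam*C1 + 2*lam*C2) + C3 * E := by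
    have := mul_le_mul_of_nonneg_left hbracket hEpos.le
    nlinarith [h1, this]
  have hfin2 : E * (-(4*lam^2)*θ + 2*lam*C1 + 2*lam*C2) + C3 * E
      = E * (-(4*lam^2)*θ + 2*lam*C1 + 2*lam*C2 + C3) := by ring
  have hfin3 : E * (-(4*lam^2)*θ + 2*lam*C1 + 2*lam*C2 + C3) < 0 :=
    mul_neg_of_pos_of_neg hEpos hkey
  linarith

lemma Qf_nonneg (p x : Fin n → ℝ) : 0 ≤ Qf p x :=
  Finset.sum_nonneg fun i _ => sq_nonneg _

lemma Qf_triangle (y p x : Fin n → ℝ) : Qf y x ≤ 2*(Qf y p + Qf p x) := by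
  simp only [Qf, Finset.mul_sum, ← Finset.sum_add_distrib]
  refine Finset.sum_le_sum fun i _ => ?_
  nlinarith [sq_nonneg ((p i - y i) - (x i - p i))]

lemma eq_of_Qf_eq_zero {p x : Fin n → ℝ} (h : Qf p x = 0) : x = p := by
  have hterm : ∀ i ∈ Finset.univ, (x i - p i)^2 = 0 := by
    intro i hi
    have := (Finset.sum_eq_zero_iff_of_nonneg (fun j _ => sq_nonneg (x j - p j))).1 h i hi
    exact this
  funext i
  have := hterm i (Finset.mem_univ i)
  have h2 : x i - p i = 0 := by
    exact pow_eq_zero_iff (by norm_num) |>.1 this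
  linarith

lemma continuous_Qf (p : Fin n → ℝ) : Continuous (Qf p) := (contDiff_Qf p).continuous

lemma isCompact_Qf_le (p : Fin n → ℝ) (r : ℝ) (hr : 0 ≤ r) :
    IsCompact {x : Fin n → ℝ | Qf p x ≤ r} := by
  apply Metric.isCompact_of_isClosed_isBounded
  · exact isClosed_Iic.preimage (continuous_Qf p)
  · apply (Metric.isBounded_closedBall (x := p) (r := Real.sqrt r)).subset
    intro x hx
    simp only [Set.mem_setOf_eq] at hx
    rw [Metric.mem_closedBall]
    rw [dist_pi_le_iff (Real.sqrt_nonneg r)]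
    intro i
    rw [Real.dist_eq]
    have h1 : (x i - p i)^2 ≤ r := by
      have := Finset.single_le_sum (f := fun j => (x j - p j)^2)
        (fun j _ => sq_nonneg _) (Finset.mem_univ i)
      calc (x i - p i)^2 ≤ Qf p x := this
        _ ≤ r := hx
    calc |x i - p i| = Real.sqrt ((x i - p i)^2) := (Real.sqrt_sq_eq_abs _).symm
      _ ≤ Real.sqrt r := Real.sqrt_le_sqrt h1

lemma Qf_comm (p y : Fin n → ℝ) : Qf p y = Qf y p :=
  Finset.sum_congr rfl fun i _ => by ring

set_option maxHeartbeats 1000000 in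
lemma noTouch {U : Set (Fin n → ℝ)} (hn : 1 ≤ n) (hUopen : IsOpen U)
    (a : (Fin n → ℝ) → Fin n → Fin n → ℝ) (b : (Fin n → ℝ) → Fin n → ℝ)
    (c : (Fin n → ℝ) → ℝ)
    (ha_cont : ∀ α β, ContinuousOn (fun x => a x α β) U)
    (hb_cont : ∀ α, ContinuousOn (fun x => b x α) U)
    (hc_cont : ContinuousOn c U)
    (ha_symm : ∀ x ∈ U, ∀ α β, a x α β = a x β α)
    (ha_posdef : ∀ x ∈ U, ∀ v : Fin n → ℝ, v ≠ 0 →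
      0 < ∑ α, ∑ β, a x α β * v α * v β)
    (hc_nonneg : ∀ x ∈ U, 0 ≤ c x)
    {u : (Fin n → ℝ) → ℝ} (hu : ContDiffOn ℝ 2 u U)
    (hLu : ∀ x ∈ U, ellOp a b c u x ≤ 0)
    {M : ℝ} (hM : 0 ≤ M) (hmax : ∀ x ∈ U, u x ≤ M)
    {y : Fin n → ℝ} (hyU : y ∈ U) (hyM : u y = M)
    {R : ℝ} (hR : 0 < R) (hRU : ∀ x, Qf y x ≤ R → x ∈ U)
    {p : Fin n → ℝ} (hpy : Qf y p < R/16) (hpM : u p < M) : False := by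
  classical
  -- Step A : compact touching set and minimizing point
  set K := {x : Fin n → ℝ | Qf y x ≤ R/4} with hKdef
  have hKU : ∀ x ∈ K, x ∈ U := fun x hx => hRU x (le_trans hx (by linarith))
  have hKcomp : IsCompact K := isCompact_Qf_le y (R/4) (by linarith)
  set SK := {x : Fin n → ℝ | x ∈ K ∧ u x = M} with hSKdef
  have hSKclosed : IsClosed SK := by
    have h1 : ContinuousOn u K := (hu.continuousOn).mono hKU
    have h2 := h1.preimage_isClosed_of_isClosed hKcomp.isClosed
      (isClosed_singleton (x := M))
    have hSKeq : SK = K ∩ u ⁻¹' {M} := by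
      ext x
      simp only [hSKdef, Set.mem_setOf_eq, Set.mem_inter_iff, Set.mem_preimage,
        Set.mem_singleton_iff]
    rw [hSKeq]
    exact h2
  have hSKcomp : IsCompact SK :=
    hKcomp.of_isClosed_subset hSKclosed (fun x hx => hx.1)
  have hQyy : Qf y y = 0 := by simp [Qf]
  have hySK : y ∈ SK := ⟨by simp only [hKdef, Set.mem_setOf_eq, hQyy]; linarith, hyM⟩
  obtain ⟨xs, hxsSK, hxsmin⟩ :=
    hSKcomp.exists_isMinOn ⟨y, hySK⟩ ((continuous_Qf p).continuousOn)
  set r2 := Qf p xs with hr2def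
  have hmin : ∀ x ∈ SK, r2 ≤ Qf p x := fun x hx => hxsmin hx
  have hr2nonneg : 0 ≤ r2 := Qf_nonneg p xs
  have hr2pos : 0 < r2 := by
    rcases hr2nonneg.lt_or_eq with h | h
    · exact h
    · exfalso
      have hxp : xs = p := eq_of_Qf_eq_zero h.symm
      rw [hxp] at hxsSK
      exact absurd hxsSK.2 (ne_of_lt hpM)
  have hr2R : r2 < R/16 := by
    have h1 : r2 ≤ Qf p y := hmin y hySK
    rw [Qf_comm p y] at h1
    linarith
  -- Step B : the closed ball {Qf p ≤ r2} sits inside K and U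
  have hQBK : ∀ x, Qf p x ≤ r2 → x ∈ K := by
    intro x hx
    have h1 := Qf_triangle y p x
    simp only [hKdef, Set.mem_setOf_eq]
    nlinarith
  have hQBU : ∀ x, Qf p x ≤ r2 → x ∈ U := fun x hx => hKU x (hQBK x hx)
  have hult : ∀ x, Qf p x < r2 → u x < M := by
    intro x hx
    have hxU := hQBU x hx.le
    rcases (hmax x hxU).lt_or_eq with h | h
    · exact h
    · exfalso
      have : x ∈ SK := ⟨hQBK x hx.le, h⟩
      exact absurd (hmin x this) (not_le.2 hx)
  -- Step C : annulus, ellipticity constant and coefficient bounds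
  set AB := {x : Fin n → ℝ | r2/4 ≤ Qf p x ∧ Qf p x ≤ r2} with hABdef
  have hABU : ∀ x ∈ AB, x ∈ U := fun x hx => hQBU x hx.2
  have hABclosed : IsClosed AB := by
    have h1 : AB = {x : Fin n → ℝ | r2/4 ≤ Qf p x} ∩ {x | Qf p x ≤ r2} := by
      ext x; simp [hABdef, Set.mem_inter_iff]
    rw [h1]
    exact (isClosed_le continuous_const (continuous_Qf p)).inter
      (isClosed_le (continuous_Qf p) continuous_const)
  have hABcomp : IsCompact AB :=
    (isCompact_Qf_le p r2 hr2pos.le).of_isClosed_subset hABclosed (fun x hx => hx.2)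
  have hxsAB : xs ∈ AB := ⟨by rw [← hr2def]; linarith, by rw [← hr2def]⟩
  set Fq := fun x : Fin n → ℝ => ∑ α, ∑ β, a x α β * (x α - p α) * (x β - p β) with hFqdef
  have hFqcont : ContinuousOn Fq U := by
    apply continuousOn_finset_sum
    intro α _
    apply continuousOn_finset_sum
    intro β _
    exact ((ha_cont α β).mul
      (((continuous_apply α).sub continuous_const).continuousOn)).mul
      (((continuous_apply β).sub continuous_const).continuousOn)
  obtain ⟨zθ, hzθ, hθmin⟩ := hABcomp.exists_isMinOn ⟨xs, hxsAB⟩ (hFqcont.mono hABU)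
  set θ := Fq zθ with hθdef
  have hθle : ∀ x ∈ AB, θ ≤ Fq x := fun x hx => hθmin hx
  have hθpos : 0 < θ := by
    have hzU := hABU zθ hzθ
    have hne : (fun i => zθ i - p i) ≠ 0 := by
      intro h
      have : Qf p zθ = 0 := by
        rw [Qf]
        apply Finset.sum_eq_zero
        intro i _
        have := congrFun h i
        simp only [Pi.zero_apply] at this
        rw [this]; ring
      have h1 := hzθ.1
      rw [this] at h1
      linarith
    have := ha_posdef zθ hzU (fun i => zθ i - p i) hne
    exact this
  set Tt := fun x : Fin n → ℝ => ∑ α, a x α α with hTtdef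
  have hTtcont : ContinuousOn Tt U :=
    continuousOn_finset_sum _ (fun α _ => ha_cont α α)
  set Gg := fun x : Fin n → ℝ => ∑ α, b x α * (x α - p α) with hGgdef
  have hGgcont : ContinuousOn Gg U :=
    continuousOn_finset_sum _ (fun α _ => (hb_cont α).mul
      (((continuous_apply α).sub continuous_const).continuousOn))
  obtain ⟨C1, hC1⟩ := hABcomp.exists_bound_of_continuousOn (hTtcont.mono hABU)
  obtain ⟨C2, hC2⟩ := hABcomp.exists_bound_of_continuousOn (hGgcont.mono hABU)
  obtain ⟨C3, hC3⟩ := hABcomp.exists_bound_of_continuousOn (hc_cont.mono hABU)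
  set lam := max 1 ((C1 + C2 + C3 + 1)/θ) with hlamdef
  have hlam1 : (1:ℝ) ≤ lam := le_max_left _ _
  have hlam0 : (0:ℝ) < lam := lt_of_lt_of_le one_pos hlam1
  have hlam2 : C1 + C2 + C3 + 1 ≤ lam * θ := by
    have h1 : (C1 + C2 + C3 + 1)/θ ≤ lam := le_max_right _ _
    exact (div_le_iff₀ hθpos).1 h1
  -- Step D : inner sphere value gap δ and the auxiliary function w
  set Cin := {x : Fin n → ℝ | Qf p x = r2/4} with hCindef
  set i0 : Fin n := ⟨0, hn⟩ with hi0def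
  set xin := Function.update p i0 (p i0 + Real.sqrt (r2/4)) with hxindef
  have hxinQ : Qf p xin = r2/4 := by
    rw [Qf, Finset.sum_eq_single i0]
    · rw [hxindef, Function.update_self]
      rw [show p i0 + Real.sqrt (r2/4) - p i0 = Real.sqrt (r2/4) by ring]
      rw [Real.sq_sqrt (by linarith)]
    · intro j _ hj
      rw [hxindef, Function.update_of_ne hj]
      ring
    · intro h; exact absurd (Finset.mem_univ _) h
  have hCinAB : ∀ x ∈ Cin, x ∈ AB := by
    intro x hx
    rw [hCindef] at hx
    exact ⟨le_of_eq hx.symm, by rw [hx]; linarith⟩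
  have hCincomp : IsCompact Cin := by
    apply (isCompact_Qf_le p r2 hr2pos.le).of_isClosed_subset
    · exact isClosed_eq (continuous_Qf p) continuous_const
    · intro x hx
      have : Qf p x = r2/4 := hx
      simp only [Set.mem_setOf_eq]
      rw [this]; linarith
  obtain ⟨mi, hmiCin, hmimax⟩ := hCincomp.exists_isMaxOn ⟨xin, hxinQ⟩
    ((hu.continuousOn).mono (fun x hx => hABU x (hCinAB x hx)))
  have hmiQ : Qf p mi = r2/4 := hmiCin
  have hmi : u mi < M := hult mi (by rw [hmiQ]; linarith)
  set δ := M - u mi with hδdef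
  have hδpos : 0 < δ := by rw [hδdef]; linarith
  set v := bar p lam r2 with hvdef
  set w := fun x1 : Fin n → ℝ => u x1 + δ * v x1 + (-M) with hwdef
  have hwC2 : ContDiffOn ℝ 2 w U := by
    apply ContDiffOn.add
    · exact hu.add ((contDiff_const.mul (contDiff_bar p lam r2)).contDiffOn)
    · exact contDiffOn_const
  have hLv : ∀ x ∈ AB, ellOp a b c v x < 0 := by
    intro x hx
    have hxU := hABU x hx
    apply ellOp_bar_lt a b c p lam r2 θ C1 C2 C3 x hθpos (hθle x hx)
    · have := hC1 x hx; rwa [Real.norm_eq_abs] at this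
    · have := hC2 x hx; rwa [Real.norm_eq_abs] at this
    · exact hc_nonneg x hxU
    · have := hC3 x hx; rw [Real.norm_eq_abs] at this
      exact (le_abs_self _).trans this
    · exact hlam1
    · exact hlam2
  have hLw : ∀ x ∈ AB, ellOp a b c w x < 0 := by
    intro x hx
    have hxU := hABU x hx
    rw [hwdef, hvdef]
    rw [ellOp_combo hUopen a b c hu (contDiff_bar p lam r2) δ (-M) hxU]
    have h3 : c x * (-M) ≤ 0 := by
      have := mul_nonneg (hc_nonneg x hxU) hM
      nlinarith
    have h2 : δ * ellOp a b c (bar p lam r2) x < 0 :=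
      mul_neg_of_pos_of_neg hδpos (by rw [← hvdef]; exact hLv x hx)
    have h1 := hLu x hxU
    linarith
  -- boundary estimates
  have hbar_le_one : ∀ x : Fin n → ℝ, bar p lam r2 x ≤ 1 := by
    intro x
    rw [bar]
    have h1 : Real.exp (-lam * Qf p x) ≤ 1 := by
      apply Real.exp_le_one_iff.2
      have := Qf_nonneg p x
      nlinarith
    have h2 : 0 ≤ Real.exp (-lam * r2) := (Real.exp_pos _).le
    linarith
  have hwb1 : ∀ x, Qf p x = r2/4 → w x ≤ 0 := by
    intro x hx
    have h1 : u x ≤ u mi := hmimax hx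
    have h2 : δ * v x ≤ δ * 1 := by
      apply mul_le_mul_of_nonneg_left _ hδpos.le
      rw [hvdef]; exact hbar_le_one x
    rw [hwdef]
    simp only []
    rw [hδdef] at h2 ⊢
    linarith
  have hwb2 : ∀ x, Qf p x = r2 → w x ≤ 0 := by
    intro x hx
    have h1 : v x = 0 := by
      rw [hvdef, bar, hx]; ring
    have h2 : u x ≤ M := hmax x (hQBU x hx.le)
    rw [hwdef]
    simp only []
    rw [h1]
    linarith
  -- weak maximum principle on the annulus
  have hW : ∀ x ∈ AB, w x ≤ 0 := by
    obtain ⟨z, hzAB, hzmax⟩ := hABcomp.exists_isMaxOn ⟨xs, hxsAB⟩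
      ((hwC2.continuousOn).mono hABU)
    intro x hx
    have hxwz : w x ≤ w z := hzmax hx
    by_contra hpos0
    push_neg at hpos0
    have hwz : 0 < w z := lt_of_lt_of_le hpos0 hxwz
    have hz1 : r2/4 < Qf p z := by
      rcases hzAB.1.lt_or_eq with h | h
      · exact h
      · exfalso; linarith [hwb1 z h.symm]
    have hz2 : Qf p z < r2 := by
      rcases hzAB.2.lt_or_eq with h | h
      · exact h
      · exfalso; linarith [hwb2 z h]
    have hzU := hABU z hzAB
    have hopen : IsOpen {x1 : Fin n → ℝ | r2/4 < Qf p x1 ∧ Qf p x1 < r2} := by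
      have h1 : {x1 : Fin n → ℝ | r2/4 < Qf p x1 ∧ Qf p x1 < r2}
          = {x1 | r2/4 < Qf p x1} ∩ {x1 | Qf p x1 < r2} := by
        ext x1; simp [Set.mem_inter_iff]
      rw [h1]
      exact (isOpen_lt continuous_const (continuous_Qf p)).inter
        (isOpen_lt (continuous_Qf p) continuous_const)
    have hlocal : IsLocalMax w z := by
      filter_upwards [hopen.mem_nhds ⟨hz1, hz2⟩] with x1 hx1
      exact hzmax ⟨hx1.1.le, hx1.2.le⟩
    have hhess := interior_max_hess hUopen hwC2 hzU hlocal (a z)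
      (ha_symm z hzU) (ha_posdef z hzU)
    have hgrad : fderiv ℝ w z = 0 := hlocal.fderiv_eq_zero
    have hL := hLw z hzAB
    rw [ellOp] at hL
    have hbterm : ∑ α, b z α * fderiv ℝ w z (Pi.single α 1) = 0 := by
      simp [hgrad]
    have hcterm : 0 ≤ c z * w z := mul_nonneg (hc_nonneg z hzU) hwz.le
    rw [hbterm] at hL
    linarith
  -- Hopf boundary-point contradiction at xs
  have hxsU : xs ∈ U := hQBU xs (le_of_eq hr2def.symm)
  have hgradu : fderiv ℝ u xs = 0 := by
    have hl : IsLocalMax u xs := by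
      filter_upwards [hUopen.mem_nhds hxsU] with x1 hx1
      rw [hxsSK.2]
      exact hmax x1 hx1
    exact hl.fderiv_eq_zero
  have hdu : DifferentiableAt ℝ u xs :=
    (hu.differentiableOn (by norm_num)).differentiableAt (hUopen.mem_nhds hxsU)
  have hdv : DifferentiableAt ℝ v xs := by
    rw [hvdef]
    exact ((contDiff_bar p lam r2).differentiable (by norm_num)).differentiableAt
  have hfw : HasFDerivAt w (fderiv ℝ u xs + δ • fderiv ℝ v xs) xs :=
    ((hdu.hasFDerivAt.add (hdv.hasFDerivAt.const_mul δ)).add_const (-M))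
  set φ : ℝ → ℝ := fun t => w (xs + t • (p - xs)) with hφdef
  have hQft : ∀ t : ℝ, Qf p (xs + t • (p - xs)) = (1-t)^2 * r2 := by
    intro t
    rw [Qf, hr2def, Qf, Finset.mul_sum]
    refine Finset.sum_congr rfl fun i _ => ?_
    simp only [Pi.add_apply, Pi.smul_apply, Pi.sub_apply, smul_eq_mul]
    ring
  have hφle : ∀ t ∈ Set.Icc (0:ℝ) (1/2), φ t ≤ 0 := by
    intro t ht
    apply hW
    have e1 : (1/4:ℝ) ≤ (1-t)^2 := by nlinarith [ht.2]
    have e2 : (1-t)^2 ≤ 1 := by nlinarith [ht.1, ht.2]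
    constructor
    · rw [hQft]; nlinarith [mul_le_mul_of_nonneg_right e1 hr2pos.le]
    · rw [hQft]; nlinarith [mul_le_mul_of_nonneg_right e2 hr2pos.le]
  have hvxs : v xs = 0 := by rw [hvdef, bar, ← hr2def]; ring
  have hφ0 : φ 0 = 0 := by
    rw [hφdef]
    simp only [zero_smul, add_zero]
    rw [hwdef]
    simp only []
    rw [hvxs, hxsSK.2]
    ring
  have hline : HasDerivAt (fun s : ℝ => xs + s • (p - xs)) (p - xs) 0 := by
    simpa using ((hasDerivAt_id (0:ℝ)).smul_const (p - xs)).const_add xs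
  set E := Real.exp (-lam * r2) with hEdef
  have hEpos : 0 < E := Real.exp_pos _
  set d := δ * (2*lam*r2*E) with hddef
  have hd : HasDerivAt φ d 0 := by
    have hfw' : HasFDerivAt w (fderiv ℝ u xs + δ • fderiv ℝ v xs)
        (xs + (0:ℝ) • (p - xs)) := by simpa using hfw
    have h1 := hfw'.comp_hasDerivAt 0 hline
    have h2 : (fderiv ℝ u xs + δ • fderiv ℝ v xs) (p - xs) = d := by
      rw [hgradu]
      simp only [ContinuousLinearMap.add_apply, ContinuousLinearMap.zero_apply,
        ContinuousLinearMap.coe_smul', Pi.smul_apply, smul_eq_mul, zero_add]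
      rw [hvdef, fderiv_bar_apply, LQ_apply]
      have h3 : ∑ i, 2*(xs i - p i) * (p - xs) i = -2 * r2 := by
        rw [hr2def, Qf, Finset.mul_sum]
        refine Finset.sum_congr rfl fun i _ => ?_
        simp only [Pi.sub_apply]
        ring
      rw [h3, hddef, ← hr2def, ← hEdef]
      ring
    rw [← h2]
    exact h1
  have hdpos : 0 < d := by
    rw [hddef]
    have : 0 < 2*lam*r2*E := by positivity
    exact mul_pos hδpos this
  have hslope := hasDerivAt_iff_tendsto_slope.1 hd
  have hmono : 𝓝[>] (0:ℝ) ≤ 𝓝[≠] (0:ℝ) :=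
    nhdsWithin_mono _ (fun t ht => ne_of_gt ht)
  have hev : ∀ᶠ t in 𝓝[>] (0:ℝ), 0 < slope φ 0 t :=
    (hslope.mono_left hmono).eventually (eventually_gt_nhds hdpos)
  have hIoo : Set.Ioo (0:ℝ) (1/2) ∈ 𝓝[>] (0:ℝ) :=
    Ioo_mem_nhdsGT (by norm_num)
  obtain ⟨t, hts, htIoo⟩ := (hev.and (eventually_of_mem hIoo (fun t ht => ht))).exists
  have h1 : slope φ 0 t = φ t / t := by
    rw [slope_def_field, hφ0]
    simp [div_eq_mul_inv]
  have h2 : 0 < φ t := by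
    have := hts
    rw [h1] at this
    have ht0 : 0 < t := htIoo.1
    have := mul_pos this ht0
    rwa [div_mul_cancel₀ _ (ne_of_gt ht0)] at this
  have h3 : φ t ≤ 0 := hφle t ⟨htIoo.1.le, htIoo.2.le⟩
  linarith

/-- Strong maximum principle for scalar elliptic operators with nonnegative
zeroth-order coefficient. -/
theorem strong_maximum_principle_elliptic
    {n : ℕ} (hn : 1 ≤ n)
    (U : Set (Fin n → ℝ)) (hUopen : IsOpen U) (hUconn : IsConnected U)
    (a : (Fin n → ℝ) → Fin n → Fin n → ℝ)
    (b : (Fin n → ℝ) → Fin n → ℝ)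
    (c : (Fin n → ℝ) → ℝ)
    (ha_cont : ∀ α β, ContinuousOn (fun x => a x α β) U)
    (hb_cont : ∀ α, ContinuousOn (fun x => b x α) U)
    (hc_cont : ContinuousOn c U)
    (ha_symm : ∀ x ∈ U, ∀ α β, a x α β = a x β α)
    (ha_posdef : ∀ x ∈ U, ∀ v : Fin n → ℝ, v ≠ 0 →
      0 < ∑ α : Fin n, ∑ β : Fin n, a x α β * v α * v β)
    (hc_nonneg : ∀ x ∈ U, 0 ≤ c x)
    (u : (Fin n → ℝ) → ℝ) (hu : ContDiffOn ℝ 2 u U)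
    (hLu : ∀ x ∈ U, ellOp a b c u x ≤ 0)
    (x₀ : Fin n → ℝ) (hx₀ : x₀ ∈ U)
    (hmax : ∀ x ∈ U, u x ≤ u x₀)
    (hx₀pos : 0 ≤ u x₀) :
    ∀ x ∈ U, u x = u x₀ := by
  intro x hx
  by_contra hne
  set M := u x₀ with hMdef
  have hxlt : u x < M := lt_of_le_of_ne (hmax x hx) hne
  have key : ∀ y ∈ U, u y = M → ∀ᶠ x1 in 𝓝 y, u x1 = M := by
    intro y hyU hyM
    by_contra hnot
    rw [Filter.not_eventually] at hnot
    obtain ⟨ρ, hρpos, hρball⟩ := Metric.isOpen_iff.1 hUopen y hyU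
    set R := (ρ/2)^2 with hRdef
    have hRpos : 0 < R := by positivity
    have hRU : ∀ x1, Qf y x1 ≤ R → x1 ∈ U := by
      intro x1 hx1
      apply hρball
      rw [Metric.mem_ball]
      have hd : dist x1 y ≤ ρ/2 := by
        rw [dist_pi_le_iff (by positivity)]
        intro i
        rw [Real.dist_eq]
        have h1 : (x1 i - y i)^2 ≤ R :=
          le_trans (Finset.single_le_sum (f := fun j => (x1 j - y j)^2)
            (fun j _ => sq_nonneg _) (Finset.mem_univ i)) hx1
        calc |x1 i - y i| = Real.sqrt ((x1 i - y i)^2) := (Real.sqrt_sq_eq_abs _).symm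
          _ ≤ Real.sqrt R := Real.sqrt_le_sqrt h1
          _ = ρ/2 := by rw [hRdef, Real.sqrt_sq (by positivity)]
      linarith
    have hnb : {x1 : Fin n → ℝ | x1 ∈ U ∧ Qf y x1 < R/16} ∈ 𝓝 y := by
      have h1 : IsOpen {x1 : Fin n → ℝ | Qf y x1 < R/16} :=
        isOpen_lt (continuous_Qf y) continuous_const
      have hQyy : Qf y y = 0 := by simp [Qf]
      have h2 : y ∈ {x1 : Fin n → ℝ | Qf y x1 < R/16} := by
        simp only [Set.mem_setOf_eq, hQyy]; linarith
      exact Filter.inter_mem (hUopen.mem_nhds hyU) (h1.mem_nhds h2)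
    obtain ⟨pp, hpp1, hpp2⟩ :=
      (hnot.and_eventually (eventually_of_mem hnb (fun z hz => hz))).exists
    have hppM : u pp < M := lt_of_le_of_ne (hmax pp hpp2.1) hpp1
    have hpy : Qf y pp < R/16 := hpp2.2
    exact noTouch hn hUopen a b c ha_cont hb_cont hc_cont ha_symm ha_posdef
      hc_nonneg hu hLu hx₀pos hmax hyU hyM hRpos hRU hpy hppM
  have hWopen : IsOpen {x1 | x1 ∈ U ∧ u x1 = M} := by
    rw [isOpen_iff_mem_nhds]
    intro z hz
    filter_upwards [hUopen.mem_nhds hz.1, key z hz.1 hz.2] with x1 h1 h2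
    exact ⟨h1, h2⟩
  have hVopen : IsOpen {x1 | x1 ∈ U ∧ u x1 < M} := by
    have h2 := (hu.continuousOn).isOpen_inter_preimage hUopen (isOpen_Iio (a := M))
    have heq : {x1 | x1 ∈ U ∧ u x1 < M} = U ∩ u ⁻¹' (Set.Iio M) := by
      ext x1
      simp [Set.mem_inter_iff, Set.mem_preimage, Set.mem_Iio]
    rw [heq]
    exact h2
  have hcover : U ⊆ {x1 | x1 ∈ U ∧ u x1 = M} ∪ {x1 | x1 ∈ U ∧ u x1 < M} := by
    intro z hz
    rcases (hmax z hz).lt_or_eq with h | h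
    · exact Or.inr ⟨hz, h⟩
    · exact Or.inl ⟨hz, h⟩
  have hne1 : (U ∩ {x1 | x1 ∈ U ∧ u x1 = M}).Nonempty := ⟨x₀, hx₀, hx₀, rfl⟩
  have hne2 : (U ∩ {x1 | x1 ∈ U ∧ u x1 < M}).Nonempty := ⟨x, hx, hx, hxlt⟩
  obtain ⟨z, _, hz1, hz2⟩ :=
    hUconn.isPreconnected _ _ hWopen hVopen hcover hne1 hne2
  exact absurd hz1.2 (ne_of_lt hz2.2)
end

section
/- (One-dimensional strong minimum principle, nonnegative zeroth-order coefficient.) Let U ⊆ ℝ be a nonempty open interval, let b, c : U → ℝ be continuous with c(x) ≥ 0 for all x ∈ U, and let u : U → ℝ be twice continuously differentiable with −u″(x) + b(x) u′(x) + c(x) u(x) ≥ 0 for all x ∈ U. If u attains its infimum over U at some point x₀ ∈ U and u(x₀) ≤ 0, then u is constant on U. -/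
open Set intervalIntegral MeasureTheory

lemma aux_right {U : Set ℝ} (hUopen : IsOpen U) (hUint : U.OrdConnected)
    {x₀ x₁ : ℝ} (hle : x₀ ≤ x₁) (hx₀U : x₀ ∈ U) (hx₁U : x₁ ∈ U)
    (b c v : ℝ → ℝ)
    (hb : ContinuousOn b U) (hc : ContinuousOn c U)
    (hv : ContDiffOn ℝ 2 v U) (hv0 : ∀ x ∈ U, 0 ≤ v x) (hvx₀ : v x₀ = 0)
    (hd0 : deriv v x₀ = 0)
    (hineq : ∀ x ∈ U, deriv (deriv v) x ≤ b x * deriv v x + c x * v x) :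
    v x₁ = 0 := by
  set J : Set ℝ := Set.Icc x₀ x₁ with hJ
  have hsub : J ⊆ U := hUint.out hx₀U hx₁U
  have hJc : IsCompact J := isCompact_Icc
  have hx₀J : x₀ ∈ J := ⟨le_rfl, hle⟩
  have hx₁J : x₁ ∈ J := ⟨hle, le_rfl⟩
  have hvcont : ContinuousOn v U := hv.continuousOn
  have hv1 : ContDiffOn ℝ 1 (deriv v) U := hv.deriv_of_isOpen hUopen (by norm_num)
  have hdvcont : ContinuousOn (deriv v) U := hv1.continuousOn
  have hdv : ∀ x ∈ U, HasDerivAt v (deriv v x) x := fun x hx =>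
    ((hv.contDiffAt (hUopen.mem_nhds hx)).differentiableAt (by norm_num)).hasDerivAt
  have hddv : ∀ x ∈ U, HasDerivAt (deriv v) (deriv (deriv v) x) x := fun x hx =>
    ((hv1.contDiffAt (hUopen.mem_nhds hx)).differentiableAt (by norm_num)).hasDerivAt
  -- fundamental theorem of calculus helper
  have FTC : ∀ f : ℝ → ℝ, ContinuousOn f U → ∀ x ∈ U,
      HasDerivAt (fun y => ∫ t in x₀..y, f t) (f x) x := by
    intro f hf x hx
    have huIcc : Set.uIcc x₀ x ⊆ U := hUint.uIcc_subset hx₀U hx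
    exact intervalIntegral.integral_hasDerivAt_right
      ((hf.mono huIcc).intervalIntegrable)
      ((hf.stronglyMeasurableAtFilter hUopen) x hx)
      (hf.continuousAt (hUopen.mem_nhds hx))
  set B : ℝ → ℝ := fun x => ∫ t in x₀..x, b t with hBdef
  have hB : ∀ x ∈ U, HasDerivAt B (b x) x := FTC b hb
  have hBcont : ContinuousOn B U := fun x hx => (hB x hx).continuousAt.continuousWithinAt
  set V : ℝ → ℝ := fun x => ∫ t in x₀..x, v t with hVdef
  have hV : ∀ x ∈ U, HasDerivAt V (v x) x := FTC v hvcont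
  have hVcont : ContinuousOn V U := fun x hx => (hV x hx).continuousAt.continuousWithinAt
  set W : ℝ → ℝ := fun x => ∫ t in x₀..x, V t with hWdef
  have hW : ∀ x ∈ U, HasDerivAt W (V x) x := FTC V hVcont
  have hVx₀ : V x₀ = 0 := intervalIntegral.integral_same
  have hWx₀ : W x₀ = 0 := intervalIntegral.integral_same
  -- V is monotone and nonnegative on J
  have hVmono : MonotoneOn V J := by
    apply monotoneOn_of_deriv_nonneg (convex_Icc _ _) (hVcont.mono hsub)
    · intro x hx
      rw [interior_Icc] at hx
      exact ((hV x (hsub (Ioo_subset_Icc_self hx))).differentiableAt).differentiableWithinAt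
    · intro x hx
      rw [interior_Icc] at hx
      have hxU := hsub (Ioo_subset_Icc_self hx)
      rw [(hV x hxU).deriv]
      exact hv0 x hxU
  have hV0 : ∀ x ∈ J, 0 ≤ V x := fun x hx => hVx₀ ▸ hVmono hx₀J hx hx.1
  -- bounds
  obtain ⟨M₁, hM₁⟩ := hJc.exists_bound_of_continuousOn
    (f := fun x => Real.exp (-B x) * c x)
    (((hBcont.mono hsub).neg.rexp).mul (hc.mono hsub))
  obtain ⟨M₂, hM₂⟩ := hJc.exists_bound_of_continuousOn
    (f := fun x => Real.exp (B x)) ((hBcont.mono hsub).rexp)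
  set K₁ : ℝ := max M₁ 0 with hK₁def
  set K₂ : ℝ := max M₂ 0 with hK₂def
  have hK₁0 : 0 ≤ K₁ := le_max_right _ _
  have hK₂0 : 0 ≤ K₂ := le_max_right _ _
  have hK₁ : ∀ x ∈ J, Real.exp (-B x) * c x ≤ K₁ := fun x hx =>
    ((le_abs_self _).trans (hM₁ x hx)).trans (le_max_left _ _)
  have hK₂ : ∀ x ∈ J, Real.exp (B x) ≤ K₂ := fun x hx =>
    ((le_abs_self _).trans (hM₂ x hx)).trans (le_max_left _ _)
  -- w and its derivative
  set w : ℝ → ℝ := fun x => Real.exp (-B x) * deriv v x with hwdef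
  have hwD : ∀ x ∈ U, HasDerivAt w
      (Real.exp (-B x) * (deriv (deriv v) x - b x * deriv v x)) x := by
    intro x hx
    have h1 : HasDerivAt (fun y => Real.exp (-B y)) (Real.exp (-B x) * -b x) x :=
      (hB x hx).neg.exp
    have : HasDerivAt (fun y => Real.exp (-B y) * deriv v y) _ x := h1.mul (hddv x hx)
    convert this using 1
    ring
  have hwx₀ : w x₀ = 0 := by simp [hwdef, hd0]
  -- step 1 : w ≤ K₁ * V on J
  have step1 : ∀ x ∈ J, w x ≤ K₁ * V x := by
    have hmono : MonotoneOn (fun x => K₁ * V x - w x) J := by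
      apply monotoneOn_of_deriv_nonneg (convex_Icc _ _)
      · exact ((hVcont.mono hsub).const_smul K₁).sub
          (((hBcont.mono hsub).neg.rexp).mul (hdvcont.mono hsub))
      · intro x hx
        rw [interior_Icc] at hx
        have hxU := hsub (Ioo_subset_Icc_self hx)
        exact (((hV x hxU).const_mul K₁).sub (hwD x hxU)).differentiableAt.differentiableWithinAt
      · intro x hx
        rw [interior_Icc] at hx
        have hxJ := Ioo_subset_Icc_self hx
        have hxU := hsub hxJ
        rw [(show HasDerivAt (fun x => K₁ * V x - w x) _ x from
          ((hV x hxU).const_mul K₁).sub (hwD x hxU)).deriv]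
        have h2 : deriv (deriv v) x - b x * deriv v x ≤ c x * v x := by
          have := hineq x hxU; linarith
        have h3 : Real.exp (-B x) * (deriv (deriv v) x - b x * deriv v x)
            ≤ Real.exp (-B x) * (c x * v x) :=
          mul_le_mul_of_nonneg_left h2 (Real.exp_nonneg _)
        have h4 : Real.exp (-B x) * (c x * v x) ≤ K₁ * v x := by
          have := mul_le_mul_of_nonneg_right (hK₁ x hxJ) (hv0 x hxU)
          calc Real.exp (-B x) * (c x * v x) = Real.exp (-B x) * c x * v x := by ring
            _ ≤ K₁ * v x := this
        linarith
    intro x hx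
    have := hmono hx₀J hx hx.1
    simp only [hvx₀, hVx₀, hwx₀, mul_zero, sub_zero, zero_sub, neg_zero] at this
    linarith
  -- step 2 : deriv v ≤ K₂ * K₁ * V on J
  have step2 : ∀ x ∈ J, deriv v x ≤ K₂ * (K₁ * V x) := by
    intro x hx
    have hdvw : deriv v x = Real.exp (B x) * w x := by
      simp only [hwdef]
      rw [← mul_assoc, ← Real.exp_add]
      simp
    rw [hdvw]
    calc Real.exp (B x) * w x ≤ Real.exp (B x) * (K₁ * V x) :=
          mul_le_mul_of_nonneg_left (step1 x hx) (Real.exp_nonneg _)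
      _ ≤ K₂ * (K₁ * V x) :=
          mul_le_mul_of_nonneg_right (hK₂ x hx) (mul_nonneg hK₁0 (hV0 x hx))
  -- step 3 : v ≤ K₂ * K₁ * W on J
  have hWcontJ : ContinuousOn W J := fun x hx => (hW x (hsub hx)).continuousAt.continuousWithinAt
  have step3 : ∀ x ∈ J, v x ≤ K₂ * K₁ * W x := by
    have hmono : MonotoneOn (fun x => K₂ * K₁ * W x - v x) J := by
      apply monotoneOn_of_deriv_nonneg (convex_Icc _ _)
      · exact (hWcontJ.const_smul (K₂ * K₁)).sub (hvcont.mono hsub)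
      · intro x hx
        rw [interior_Icc] at hx
        have hxU := hsub (Ioo_subset_Icc_self hx)
        exact (((hW x hxU).const_mul (K₂ * K₁)).sub
          (hdv x hxU)).differentiableAt.differentiableWithinAt
      · intro x hx
        rw [interior_Icc] at hx
        have hxJ := Ioo_subset_Icc_self hx
        have hxU := hsub hxJ
        rw [(show HasDerivAt (fun x => K₂ * K₁ * W x - v x) _ x from
          ((hW x hxU).const_mul (K₂ * K₁)).sub (hdv x hxU)).deriv]
        have := step2 x hxJ
        have h5 : K₂ * (K₁ * V x) = K₂ * K₁ * V x := by ring
        linarith [h5 ▸ this]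
    intro x hx
    have := hmono hx₀J hx hx.1
    simp only [hvx₀, hWx₀, mul_zero, sub_zero, zero_sub, neg_zero] at this
    linarith
  -- step 4 : W ≤ (x₁ - x₀) * V on J
  have step4 : ∀ x ∈ J, W x ≤ (x₁ - x₀) * V x := by
    intro x hx
    have hux : Set.uIcc x₀ x = Set.Icc x₀ x := Set.uIcc_of_le hx.1
    have hIcc : Set.Icc x₀ x ⊆ J := Set.Icc_subset_Icc_right hx.2
    have hVle : ∀ t ∈ Set.Icc x₀ x, V t ≤ V x := fun t ht =>
      hVmono (hIcc ht) hx ht.2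
    have h6 : W x ≤ ∫ _ in x₀..x, V x := by
      apply intervalIntegral.integral_mono_on hx.1
      · exact ((hVcont.mono hsub).mono (hux ▸ hIcc)).intervalIntegrable
      · exact intervalIntegrable_const
      · exact hVle
    have h7 : (∫ _ in x₀..x, V x) = (x - x₀) * V x := by
      rw [intervalIntegral.integral_const, smul_eq_mul]
    have h8 : (x - x₀) * V x ≤ (x₁ - x₀) * V x :=
      mul_le_mul_of_nonneg_right (by linarith [hx.2]) (hV0 x hx)
    linarith
  -- combine : v ≤ K * V on J
  set K : ℝ := K₂ * K₁ * (x₁ - x₀) with hKdef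
  have hKV : ∀ x ∈ J, v x ≤ K * V x := by
    intro x hx
    have := mul_le_mul_of_nonneg_left (step4 x hx) (mul_nonneg hK₂0 hK₁0)
    calc v x ≤ K₂ * K₁ * W x := step3 x hx
      _ ≤ K₂ * K₁ * ((x₁ - x₀) * V x) := this
      _ = K * V x := by ring
  -- step 5 : Gronwall
  have hanti : AntitoneOn (fun x => V x * Real.exp (-K * x)) J := by
    apply antitoneOn_of_deriv_nonpos (convex_Icc _ _)
    · exact (hVcont.mono hsub).mul (Continuous.continuousOn (by continuity))
    · intro x hx
      rw [interior_Icc] at hx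
      have hxU := hsub (Ioo_subset_Icc_self hx)
      have hexp : HasDerivAt (fun x => Real.exp (-K * x)) (Real.exp (-K * x) * (-K)) x := by
        simpa using ((hasDerivAt_id x).const_mul (-K)).exp
      exact ((hV x hxU).mul hexp).differentiableAt.differentiableWithinAt
    · intro x hx
      rw [interior_Icc] at hx
      have hxJ := Ioo_subset_Icc_self hx
      have hxU := hsub hxJ
      have hexp : HasDerivAt (fun x => Real.exp (-K * x)) (Real.exp (-K * x) * (-K)) x := by
        simpa using ((hasDerivAt_id x).const_mul (-K)).exp
      rw [(show HasDerivAt (fun x => V x * Real.exp (-K * x)) _ x from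
        (hV x hxU).mul hexp).deriv]
      have h9 : v x - K * V x ≤ 0 := by linarith [hKV x hxJ]
      have h10 : (v x - K * V x) * Real.exp (-K * x) ≤ 0 :=
        mul_nonpos_of_nonpos_of_nonneg h9 (Real.exp_nonneg _)
      nlinarith [Real.exp_nonneg (-K * x)]
  have hφ : V x₁ * Real.exp (-K * x₁) ≤ 0 := by
    have := hanti hx₀J hx₁J hle
    simpa [hVx₀] using this
  have hVx₁ : V x₁ = 0 := by
    have hle0 : V x₁ ≤ 0 := by
      by_contra h
      push_neg at h
      exact absurd hφ (not_le.mpr (mul_pos h (Real.exp_pos _)))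
    exact le_antisymm hle0 (hV0 x₁ hx₁J)
  have := hKV x₁ hx₁J
  rw [hVx₁, mul_zero] at this
  exact le_antisymm this (hv0 x₁ hx₁U)

lemma aux_left {U : Set ℝ} (hUopen : IsOpen U) (hUint : U.OrdConnected)
    {x₀ x₁ : ℝ} (hle : x₁ ≤ x₀) (hx₀U : x₀ ∈ U) (hx₁U : x₁ ∈ U)
    (b c v : ℝ → ℝ)
    (hb : ContinuousOn b U) (hc : ContinuousOn c U)
    (hv : ContDiffOn ℝ 2 v U) (hv0 : ∀ x ∈ U, 0 ≤ v x) (hvx₀ : v x₀ = 0)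
    (hd0 : deriv v x₀ = 0)
    (hineq : ∀ x ∈ U, deriv (deriv v) x ≤ b x * deriv v x + c x * v x) :
    v x₁ = 0 := by
  set U' : Set ℝ := Neg.neg ⁻¹' U with hU'def
  have hmemU' : ∀ x : ℝ, x ∈ U' ↔ -x ∈ U := fun x => Iff.rfl
  have hU'open : IsOpen U' := hUopen.preimage continuous_neg
  have hU'int : U'.OrdConnected := by
    constructor
    intro x hx y hy z hz
    have h1 : -z ∈ Set.Icc (-y) (-x) := ⟨neg_le_neg hz.2, neg_le_neg hz.1⟩
    exact hUint.out hy hx h1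
  have hx₀U' : -x₀ ∈ U' := by rw [hmemU', neg_neg]; exact hx₀U
  have hx₁U' : -x₁ ∈ U' := by rw [hmemU', neg_neg]; exact hx₁U
  have hd : deriv (fun x => v (-x)) = fun x => -deriv v (-x) :=
    funext fun x => deriv_comp_neg v x
  have hdd : ∀ x : ℝ, deriv (deriv (fun x => v (-x))) x = deriv (deriv v) (-x) := by
    intro x
    rw [hd]
    have : deriv (fun x => -deriv v (-x)) x = -deriv (fun x => deriv v (-x)) x := deriv.neg
    rw [this, deriv_comp_neg (deriv v) x, neg_neg]
  have key : (fun x => v (-x)) (-x₁) = 0 := by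
    apply aux_right hU'open hU'int (x₀ := -x₀) (x₁ := -x₁) (neg_le_neg hle) hx₀U' hx₁U'
      (fun x => -b (-x)) (fun x => c (-x)) (fun x => v (-x))
    · exact (hb.comp continuous_neg.continuousOn (fun x hx => hx)).neg
    · exact hc.comp continuous_neg.continuousOn (fun x hx => hx)
    · exact hv.comp contDiff_neg.contDiffOn (fun x hx => hx)
    · intro x hx
      exact hv0 (-x) hx
    · simpa using hvx₀
    · rw [deriv_comp_neg, neg_neg, hd0, neg_zero]
    · intro x hx
      rw [hdd x, hd]
      have := hineq (-x) hx
      ring_nf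
      ring_nf at this
      linarith
  simpa using key

/-- One-dimensional strong minimum principle with nonnegative zeroth-order coefficient:
if `-u'' + b u' + c u ≥ 0` on a nonempty open interval `U` with `c ≥ 0`, and `u` attains
a nonpositive infimum at an interior point, then `u` is constant on `U`. -/
theorem one_dim_strong_minimum_principle
    (U : Set ℝ) (hUopen : IsOpen U) (hUne : U.Nonempty) (hUint : U.OrdConnected)
    (b c : ℝ → ℝ)
    (hb_cont : ContinuousOn b U) (hc_cont : ContinuousOn c U)
    (hc_nonneg : ∀ x ∈ U, 0 ≤ c x)
    (u : ℝ → ℝ) (hu : ContDiffOn ℝ 2 u U)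
    (hineq : ∀ x ∈ U, 0 ≤ -(deriv (deriv u) x) + b x * deriv u x + c x * u x)
    (x₀ : ℝ) (hx₀ : x₀ ∈ U)
    (hmin : ∀ x ∈ U, u x₀ ≤ u x)
    (hx₀neg : u x₀ ≤ 0) :
    ∀ x ∈ U, u x = u x₀ := by
  set v : ℝ → ℝ := fun y => u y - u x₀ with hvdef
  have hv : ContDiffOn ℝ 2 v U := hu.sub contDiffOn_const
  have hv0 : ∀ y ∈ U, 0 ≤ v y := fun y hy => sub_nonneg.mpr (hmin y hy)
  have hvx₀ : v x₀ = 0 := sub_self _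
  have hdvu : deriv v = deriv u := funext fun y => deriv_sub_const _
  have hd0 : deriv v x₀ = 0 := by
    rw [hdvu]
    have hloc : IsLocalMin u x₀ := by
      filter_upwards [hUopen.mem_nhds hx₀] with y hy using hmin y hy
    exact hloc.deriv_eq_zero
  have hineqv : ∀ y ∈ U, deriv (deriv v) y ≤ b y * deriv v y + c y * v y := by
    intro y hy
    rw [hdvu]
    have h1 := hineq y hy
    have h2 : c y * u x₀ ≤ 0 := mul_nonpos_of_nonneg_of_nonpos (hc_nonneg y hy) hx₀neg
    have h3 : c y * v y = c y * u y - c y * u x₀ := by rw [hvdef]; ring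
    rw [h3]
    linarith
  intro x hx
  have hvx : v x = 0 := by
    rcases le_total x₀ x with h | h
    · exact aux_right hUopen hUint h hx₀ hx b c v hb_cont hc_cont hv hv0 hvx₀ hd0 hineqv
    · exact aux_left hUopen hUint h hx₀ hx b c v hb_cont hc_cont hv hv0 hvx₀ hd0 hineqv
  have : u x - u x₀ = 0 := hvx
  linarith
end

section
/- (One-dimensional strong minimum principle, strictly positive zeroth-order coefficient.) Let U ⊆ ℝ be a nonempty open interval, let b, c : U → ℝ be continuous with c(x) > 0 for all x ∈ U, and let u : U → ℝ be twice continuously differentiable with −u″(x) + b(x) u′(x) + c(x) u(x) ≥ 0 for all x ∈ U. If u attains its infimum over U at some point x₀ ∈ U and u(x₀) ≤ 0, then u vanishes identically on U. -/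
open Set Filter Topology

lemma second_deriv_nonneg_of_isLocalMin {f : ℝ → ℝ} {x : ℝ}
    (hf : ∀ᶠ y in 𝓝 x, DifferentiableAt ℝ f y)
    (hf' : DifferentiableAt ℝ (deriv f) x)
    (hmin : IsLocalMin f x) : 0 ≤ deriv (deriv f) x := by
  by_contra hneg
  push_neg at hneg
  have h0 : deriv f x = 0 := hmin.deriv_eq_zero
  have hd : HasDerivAt (deriv f) (deriv (deriv f) x) x := hf'.hasDerivAt
  rw [hasDerivAt_iff_tendsto_slope] at hd
  have hslope : ∀ᶠ y in 𝓝[≠] x, slope (deriv f) x y < 0 :=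
    hd.eventually (Iio_mem_nhds hneg)
  have hslope' : ∀ᶠ y in 𝓝[>] x, slope (deriv f) x y < 0 :=
    hslope.filter_mono (nhdsWithin_mono x fun y hy => ne_of_gt hy)
  have hderiv_neg : ∀ᶠ y in 𝓝[>] x, deriv f y < 0 := by
    filter_upwards [hslope', self_mem_nhdsWithin] with y hy hy'
    have hxy : (0:ℝ) < y - x := sub_pos.mpr hy'
    rw [slope_def_field, h0, sub_zero] at hy
    have := (div_neg_iff.mp hy)
    rcases this with ⟨h1, h2⟩ | ⟨h1, h2⟩
    · linarith
    · exact h1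
  obtain ⟨e, he, hIoc⟩ := mem_nhdsGT_iff_exists_Ioc_subset.mp hderiv_neg
  obtain ⟨δ, hδ, hball⟩ := Metric.eventually_nhds_iff.mp (hf.and hmin)
  set y₀ := min e (x + δ/2) with hy₀def
  have hxy₀ : x < y₀ := lt_min he (by linarith)
  have hmem : ∀ y ∈ Icc x y₀, dist y x < δ := by
    intro y hy
    rw [Real.dist_eq, abs_sub_lt_iff]
    constructor
    · have : y ≤ x + δ/2 := le_trans hy.2 (min_le_right _ _)
      linarith
    · linarith [hy.1]
  have hcont : ContinuousOn f (Icc x y₀) := fun y hy =>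
    ((hball (hmem y hy)).1).continuousAt.continuousWithinAt
  have hanti : StrictAntiOn f (Icc x y₀) := by
    apply strictAntiOn_of_deriv_neg (convex_Icc x y₀) hcont
    intro y hy
    rw [interior_Icc] at hy
    exact hIoc ⟨hy.1, le_trans hy.2.le (min_le_left _ _)⟩
  have h1 : f y₀ < f x := hanti (left_mem_Icc.mpr hxy₀.le) (right_mem_Icc.mpr hxy₀.le) hxy₀
  have h2 : f x ≤ f y₀ := (hball (hmem y₀ (right_mem_Icc.mpr hxy₀.le))).2
  linarith

set_option maxHeartbeats 1600000 in
lemma hopf_right (U : Set ℝ) (hUopen : IsOpen U)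
    (b c : ℝ → ℝ) (hb_cont : ContinuousOn b U) (hc_cont : ContinuousOn c U)
    (hc_pos : ∀ x ∈ U, 0 < c x)
    (u : ℝ → ℝ) (hu : ContDiffOn ℝ 2 u U)
    (hineq : ∀ x ∈ U, 0 ≤ -(deriv (deriv u) x) + b x * deriv u x + c x * u x)
    (a x₂ : ℝ) (hax : a < x₂) (hIcc : Icc a x₂ ⊆ U)
    (hamin : ∀ x ∈ U, u a ≤ u x) (ha0 : u a ≤ 0) :
    u x₂ ≤ u a := by
  by_contra hcon
  push_neg at hcon
  have haU : a ∈ U := hIcc ⟨le_refl a, hax.le⟩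
  have hx₂U : x₂ ∈ U := hIcc ⟨hax.le, le_refl x₂⟩
  -- differentiability facts
  have hudiff : ∀ y ∈ U, DifferentiableAt ℝ u y := fun y hy =>
    (hu.contDiffAt (hUopen.mem_nhds hy)).differentiableAt (by norm_num)
  have hdu1 : ContDiffOn ℝ 1 (deriv u) U := hu.deriv_of_isOpen hUopen (by norm_num)
  have hdudiff : ∀ y ∈ U, DifferentiableAt ℝ (deriv u) y := fun y hy =>
    (hdu1.contDiffAt (hUopen.mem_nhds hy)).differentiableAt (by norm_num)
  -- bounds on b and c on the compact interval
  have hK : IsCompact (Icc a x₂) := isCompact_Icc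
  obtain ⟨yB, _, hyB⟩ := hK.exists_isMaxOn (nonempty_Icc.mpr hax.le)
    ((hb_cont.mono hIcc).abs)
  obtain ⟨yC, _, hyC⟩ := hK.exists_isMaxOn (nonempty_Icc.mpr hax.le)
    (hc_cont.mono hIcc)
  set B := max (|b yB|) 0 with hBdef
  set C := max (c yC) 0 with hCdef
  have hBnn : 0 ≤ B := le_max_right _ _
  have hCnn : 0 ≤ C := le_max_right _ _
  have hbB : ∀ y ∈ Icc a x₂, |b y| ≤ B := fun y hy =>
    le_trans (hyB hy) (le_max_left _ _)
  have hcC : ∀ y ∈ Icc a x₂, c y ≤ C := fun y hy =>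
    le_trans (hyC hy) (le_max_left _ _)
  set α : ℝ := B + C + 1 with hαdef
  have hα1 : 1 ≤ α := by linarith
  have hαpos : 0 < α := by linarith
  have hkey : B * α + C < α ^ 2 := by nlinarith
  clear_value B C α
  -- the barrier function
  set z : ℝ → ℝ := fun y => Real.exp (α * (y - a)) - 1 with hzdef
  set z' : ℝ → ℝ := fun y => Real.exp (α * (y - a)) * α with hz'def
  have hlin : ∀ y : ℝ, HasDerivAt (fun t : ℝ => α * (t - a)) α y := by
    intro y
    simpa using ((hasDerivAt_id y).sub_const a).const_mul α
  have hzd : ∀ y : ℝ, HasDerivAt z (z' y) y := fun y =>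
    (hlin y).exp.sub_const 1
  have hz'd : ∀ y : ℝ, HasDerivAt z' (Real.exp (α * (y - a)) * α * α) y := fun y =>
    (hlin y).exp.mul_const α
  have hza : z a = 0 := by simp [hzdef]
  have hzx₂pos : 0 < z x₂ := by
    have : (0:ℝ) < α * (x₂ - a) := mul_pos hαpos (by linarith)
    have h' := Real.add_one_le_exp (α * (x₂ - a))
    simp only [hzdef]
    linarith
  set m := u a with hmdef
  set ε := (u x₂ - m) / z x₂ with hεdef
  have hεpos : 0 < ε := div_pos (by linarith) hzx₂pos
  set ψ : ℝ → ℝ := fun y => u y - m - ε * z y with hψdef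
  have hψd : ∀ y ∈ U, HasDerivAt ψ (deriv u y - ε * z' y) y := by
    intro y hy
    exact (((hudiff y hy).hasDerivAt).sub_const m).sub ((hzd y).const_mul ε)
  have hψa : ψ a = 0 := by simp [hψdef, hza, hmdef]
  have hψx₂ : ψ x₂ = 0 := by
    have : ε * z x₂ = u x₂ - m := div_mul_cancel₀ _ (ne_of_gt hzx₂pos)
    simp [hψdef, this]
  have hzcont : Continuous z := by
    rw [hzdef]; fun_prop
  have hψcont : ContinuousOn ψ (Icc a x₂) := by
    rw [hψdef]
    exact ((hu.continuousOn.mono hIcc).sub continuousOn_const).sub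
      (continuousOn_const.mul hzcont.continuousOn)
  clear_value z z' m ε ψ
  obtain ⟨xs, hxsmem, hxsmin⟩ := hK.exists_isMinOn (nonempty_Icc.mpr hax.le) hψcont
  by_cases hint : xs ∈ Ioo a x₂
  · -- interior minimum: contradiction with the operator inequality
    have hxsU : xs ∈ U := hIcc (Ioo_subset_Icc_self hint)
    have hloc : IsLocalMin ψ xs := by
      apply hxsmin.isLocalMin
      exact Icc_mem_nhds hint.1 hint.2
    have hψ'eq : ∀ y ∈ U, deriv ψ y = deriv u y - ε * z' y := fun y hy => (hψd y hy).deriv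
    have hψ'ev : deriv ψ =ᶠ[𝓝 xs] fun y => deriv u y - ε * z' y := by
      filter_upwards [hUopen.mem_nhds hxsU] with y hy using hψ'eq y hy
    have hg : DifferentiableAt ℝ (fun y => deriv u y - ε * z' y) xs :=
      (hdudiff xs hxsU).sub (((hz'd xs).const_mul ε).differentiableAt)
    have hψ2 : 0 ≤ deriv (deriv ψ) xs := by
      apply second_deriv_nonneg_of_isLocalMin _ _ hloc
      · filter_upwards [hUopen.mem_nhds hxsU] with y hy using (hψd y hy).differentiableAt
      · exact hψ'ev.differentiableAt_iff.mpr hg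
    have hψ2eq : deriv (deriv ψ) xs =
        deriv (deriv u) xs - ε * (Real.exp (α * (xs - a)) * α * α) := by
      rw [hψ'ev.deriv_eq]
      exact ((hdudiff xs hxsU).hasDerivAt.sub ((hz'd xs).const_mul ε)).deriv
    have hψ1 : deriv ψ xs = 0 := hloc.deriv_eq_zero
    have hdueq : deriv u xs = ε * z' xs := by
      have := hψ'eq xs hxsU
      rw [hψ1] at this
      linarith
    have hψxs : ψ xs ≤ 0 := by
      have h : ψ xs ≤ ψ a := hxsmin (left_mem_Icc.mpr hax.le)
      linarith [hψa, h]
    -- assemble the contradiction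
    set E := Real.exp (α * (xs - a)) with hEdef
    have hEpos : 0 < E := Real.exp_pos _
    have hzxs : z xs = E - 1 := by rw [hzdef, hEdef]
    have hz'xs : z' xs = E * α := by rw [hz'def, hEdef]
    have hE1 : 1 ≤ E := by
      have h' := Real.add_one_le_exp (α * (xs - a))
      have h'' : 0 ≤ α * (xs - a) := mul_nonneg hαpos.le (by linarith [hint.1.le])
      rw [hEdef]
      linarith
    clear_value E
    have h1 := hineq xs hxsU
    have h2 : deriv (deriv u) xs ≥ ε * (E * α * α) := by
      have := hψ2
      rw [hψ2eq] at this
      linarith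
    have h3 : u xs ≤ m + ε * (E - 1) := by
      have h := hψxs
      rw [hψdef] at h
      simp only at h
      rw [hzxs] at h
      linarith
    have hcxs : 0 < c xs := hc_pos xs hxsU
    have hcxsC : c xs ≤ C := hcC xs (Ioo_subset_Icc_self hint)
    have hbxs : |b xs| ≤ B := hbB xs (Ioo_subset_Icc_self hint)
    have hbd : b xs * deriv u xs ≤ B * (ε * (E * α)) := by
      rw [hdueq, hz'xs]
      have h5 : 0 ≤ ε * (E * α) := by positivity
      calc b xs * (ε * (E * α)) ≤ |b xs| * (ε * (E * α)) :=
            mul_le_mul_of_nonneg_right (le_abs_self _) h5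
        _ ≤ B * (ε * (E * α)) := mul_le_mul_of_nonneg_right hbxs h5
    have hcu : c xs * u xs ≤ ε * C * E := by
      have hm0 : c xs * m ≤ 0 := mul_nonpos_of_nonneg_of_nonpos hcxs.le ha0
      have : c xs * u xs ≤ c xs * (m + ε * (E - 1)) :=
        mul_le_mul_of_nonneg_left h3 hcxs.le
      have h6 : c xs * (ε * (E - 1)) ≤ C * (ε * (E - 1)) :=
        mul_le_mul_of_nonneg_right hcxsC (by nlinarith)
      nlinarith
    -- 0 ≤ -ε E α² + B ε E α + ε C E = ε E (-α² + B α + C) < 0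
    have h7 : ε * E * (B * α + C) < ε * E * α ^ 2 :=
      mul_lt_mul_of_pos_left hkey (mul_pos hεpos hEpos)
    have h8 : (0:ℝ) ≤ -(ε * (E * α * α)) + B * (ε * (E * α)) + ε * C * E := by
      linarith [h1, h2, hbd, hcu]
    clear hψ'ev hψcont hψd hxsmin hloc hψ2eq hzd hz'd hzcont hineq h1 h2 hbd hcu
    linarith [h7, h8]
  · -- minimum at an endpoint: ψ ≥ 0, contradiction with negative derivative at a
    have hxs_end : ψ xs = 0 := by
      rcases hxsmem.1.lt_or_eq with h | h
      · rcases hxsmem.2.lt_or_eq with h' | h'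
        · exact absurd ⟨h, h'⟩ hint
        · rw [h']; exact hψx₂
      · rw [← h]; exact hψa
    have hψnn : ∀ y ∈ Icc a x₂, 0 ≤ ψ y := by
      intro y hy
      have h : ψ xs ≤ ψ y := hxsmin hy
      linarith [hxs_end, h]
    have hdua : deriv u a = 0 := by
      have : IsLocalMin u a := by
        apply IsMinOn.isLocalMin _ (hUopen.mem_nhds haU)
        intro y hy
        show u a ≤ u y
        rw [← hmdef]
        exact hamin y hy
      exact this.deriv_eq_zero
    have hψda : HasDerivAt ψ (-(ε * α)) a := by
      have := hψd a haU
      rw [hdua] at this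
      have hz'a : z' a = α := by rw [hz'def]; simp
      rw [hz'a] at this
      simpa using this
    rw [hasDerivAt_iff_tendsto_slope] at hψda
    have hslope : ∀ᶠ y in 𝓝[>] a, slope ψ a y < 0 := by
      have h7 : ∀ᶠ y in 𝓝[≠] a, slope ψ a y < 0 :=
        hψda.eventually (Iio_mem_nhds (neg_lt_zero.mpr (mul_pos hεpos hαpos)))
      exact h7.filter_mono (nhdsWithin_mono a fun y hy => ne_of_gt hy)
    have hIocx : Ioc a x₂ ∈ 𝓝[>] a := Ioc_mem_nhdsGT_of_mem ⟨le_refl a, hax⟩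
    have : ∀ᶠ y in 𝓝[>] a, False := by
      filter_upwards [hslope, hIocx, self_mem_nhdsWithin] with y h8 h9 h10
      rw [slope_def_field, hψa, sub_zero] at h8
      have hya : 0 < y - a := sub_pos.mpr h10
      have : ψ y < 0 := by
        rcases div_neg_iff.mp h8 with ⟨h11, h12⟩ | ⟨h11, h12⟩
        · linarith
        · exact h11
      exact absurd (hψnn y (Ioc_subset_Icc_self h9)) (not_le.mpr this)
    rcases this.exists with ⟨y, hy⟩
    exact hy

/-- One-dimensional strong minimum principle with strictly positive zeroth-order
coefficient: if `-u'' + b u' + c u ≥ 0` on a nonempty open interval `U` with `c > 0`,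
and `u` attains a nonpositive infimum at an interior point, then `u ≡ 0` on `U`. -/
theorem one_dim_strong_minimum_principle_pos
    (U : Set ℝ) (hUopen : IsOpen U) (hUne : U.Nonempty) (hUint : U.OrdConnected)
    (b c : ℝ → ℝ)
    (hb_cont : ContinuousOn b U) (hc_cont : ContinuousOn c U)
    (hc_pos : ∀ x ∈ U, 0 < c x)
    (u : ℝ → ℝ) (hu : ContDiffOn ℝ 2 u U)
    (hineq : ∀ x ∈ U, 0 ≤ -(deriv (deriv u) x) + b x * deriv u x + c x * u x)
    (x₀ : ℝ) (hx₀ : x₀ ∈ U)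
    (hmin : ∀ x ∈ U, u x₀ ≤ u x)
    (hx₀neg : u x₀ ≤ 0) :
    ∀ x ∈ U, u x = 0 := by
  -- Step 1: u is constant equal to u x₀ on U
  have hconst : ∀ x ∈ U, u x = u x₀ := by
    intro x hx
    rcases lt_trichotomy x₀ x with h | h | h
    · exact le_antisymm
        (hopf_right U hUopen b c hb_cont hc_cont hc_pos u hu hineq x₀ x h
          (hUint.out hx₀ hx) hmin hx₀neg) (hmin x hx)
    · rw [← h]
    · -- reflection
      set U' : Set ℝ := (fun y => -y) ⁻¹' U with hU'def
      have hU'open : IsOpen U' := hUopen.preimage continuous_neg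
      set u' : ℝ → ℝ := fun y => u (-y) with hu'def
      set b' : ℝ → ℝ := fun y => -(b (-y)) with hb'def
      set c' : ℝ → ℝ := fun y => c (-y) with hc'def
      have hmaps : MapsTo (fun y : ℝ => -y) U' U := fun y hy => hy
      have hcontneg : ContinuousOn (fun y : ℝ => -y) U' := continuous_neg.continuousOn
      have hu' : ContDiffOn ℝ 2 u' U' :=
        hu.comp (contDiff_neg.contDiffOn) hmaps
      have hb' : ContinuousOn b' U' := ((hb_cont.comp hcontneg hmaps)).neg
      have hc' : ContinuousOn c' U' := hc_cont.comp hcontneg hmaps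
      have hc'pos : ∀ y ∈ U', 0 < c' y := fun y hy => hc_pos (-y) hy
      have hderiv1 : deriv u' = fun y => -deriv u (-y) := by
        funext y
        exact deriv_comp_neg u y
      have hderiv2 : ∀ y : ℝ, deriv (deriv u') y = deriv (deriv u) (-y) := by
        intro y
        rw [hderiv1]
        rw [show (fun y => -deriv u (-y)) = fun y => -(fun t => deriv u (-t)) y from rfl]
        rw [deriv.fun_neg]
        rw [deriv_comp_neg (deriv u) y]
        ring
      have hineq' : ∀ y ∈ U', 0 ≤ -(deriv (deriv u') y) + b' y * deriv u' y + c' y * u' y := by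
        intro y hy
        have h1 := hineq (-y) hy
        rw [hderiv2, hderiv1]
        simp only [hb'def, hc'def, hu'def]
        ring_nf
        ring_nf at h1
        linarith
      have hIcc' : Icc (-x₀) (-x) ⊆ U' := by
        intro y hy
        have : -y ∈ Icc x x₀ := ⟨by linarith [hy.2], by linarith [hy.1]⟩
        exact hUint.out hx hx₀ this
      have hamin' : ∀ y ∈ U', u' (-x₀) ≤ u' y := by
        intro y hy
        simp only [hu'def, neg_neg]
        exact hmin (-y) hy
      have ha0' : u' (-x₀) ≤ 0 := by simpa [hu'def] using hx₀neg
      have := hopf_right U' hU'open b' c' hb' hc' hc'pos u' hu' hineq'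
        (-x₀) (-x) (by linarith) hIcc' hamin' ha0'
      simp only [hu'def, neg_neg] at this
      exact le_antisymm this (hmin x hx)
  -- Step 2: the constant is 0
  have hm0 : u x₀ = 0 := by
    have hev : u =ᶠ[𝓝 x₀] fun _ => u x₀ := by
      filter_upwards [hUopen.mem_nhds hx₀] with y hy using hconst y hy
    have hdev : ∀ x ∈ U, deriv u x = 0 := by
      intro x hx
      have hev' : u =ᶠ[𝓝 x] fun _ => u x₀ := by
        filter_upwards [hUopen.mem_nhds hx] with y hy using hconst y hy
      rw [hev'.deriv_eq]
      exact deriv_const x _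
    have hdev2 : deriv (deriv u) x₀ = 0 := by
      have hev2 : deriv u =ᶠ[𝓝 x₀] fun _ => (0:ℝ) := by
        filter_upwards [hUopen.mem_nhds hx₀] with y hy using hdev y hy
      rw [hev2.deriv_eq]
      exact deriv_const x₀ _
    have h1 := hineq x₀ hx₀
    rw [hdev2, hdev x₀ hx₀] at h1
    have hc0 := hc_pos x₀ hx₀
    nlinarith
  intro x hx
  rw [hconst x hx, hm0]
end

section
/- (One-dimensional weak minimum principle: boundary sign controls interior sign.) Let a < b be real numbers, let p, c : (a,b) → ℝ be continuous and bounded with c(x) ≥ 0 for all x ∈ (a,b), and let u : [a,b] → ℝ be continuous on [a,b] and twice continuously differentiable on (a,b) with −u″(x) + p(x) u′(x) + c(x) u(x) ≥ 0 for all x ∈ (a,b). If u(a) ≥ 0 and u(b) ≥ 0, then u(x) ≥ 0 for all x ∈ [a,b]. -/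
open Set

lemma second_nonneg_of_isLocalMin {f g g' : ℝ → ℝ} {s : Set ℝ} (hs : IsOpen s) {x : ℝ} (hx : x ∈ s)
    (hf : ∀ y ∈ s, HasDerivAt f (g y) y)
    (hg : ∀ y ∈ s, HasDerivAt g (g' y) y)
    (hg' : ContinuousOn g' s)
    (hmin : IsLocalMin f x) : 0 ≤ g' x := by
  by_contra h
  push_neg at h
  have hgx : g x = 0 := by
    have := hmin.deriv_eq_zero
    rwa [(hf x hx).deriv] at this
  have hev : ∀ᶠ y in nhds x, g' y < 0 ∧ y ∈ s := by
    have h1 : ∀ᶠ y in nhds x, g' y < 0 :=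
      (hg'.continuousAt (hs.mem_nhds hx)).eventually_lt continuousAt_const h
    exact h1.and (hs.eventually_mem hx)
  obtain ⟨δ, hδpos, hδ⟩ := Metric.eventually_nhds_iff.1 hev
  have hball : ∀ y ∈ Icc x (x + δ/2), g' y < 0 ∧ y ∈ s := by
    intro y hy
    apply hδ
    rw [Real.dist_eq, abs_lt]
    constructor <;> [linarith [hy.1]; linarith [hy.2]]
  have hconv : Convex ℝ (Icc x (x + δ/2)) := convex_Icc _ _
  have hgcont : ContinuousOn g (Icc x (x + δ/2)) := fun y hy =>
    ((hg y (hball y hy).2).continuousAt).continuousWithinAt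
  have hintsub : interior (Icc x (x + δ/2)) ⊆ Icc x (x + δ/2) := interior_subset
  have hganti : StrictAntiOn g (Icc x (x + δ/2)) := by
    apply strictAntiOn_of_deriv_neg hconv hgcont
    intro y hy
    rw [(hg y (hball y (hintsub hy)).2).deriv]
    exact (hball y (hintsub hy)).1
  have hfanti : StrictAntiOn f (Icc x (x + δ/2)) := by
    apply strictAntiOn_of_deriv_neg hconv
    · exact fun y hy => ((hf y (hball y hy).2).continuousAt).continuousWithinAt
    · intro y hy
      rw [(hf y (hball y (hintsub hy)).2).deriv]
      rw [interior_Icc] at hy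
      calc g y < g x := hganti (left_mem_Icc.2 (by linarith)) ⟨hy.1.le, hy.2.le⟩ hy.1
        _ = 0 := hgx
  obtain ⟨η, hηpos, hη⟩ := Metric.eventually_nhds_iff.1 hmin
  set t := min (δ/2) (η/2) with ht
  have htpos : 0 < t := lt_min (by linarith) (by linarith)
  have h1 : f (x + t) < f x := by
    apply hfanti (left_mem_Icc.2 (by linarith)) _ (by linarith)
    have : t ≤ δ/2 := min_le_left _ _
    exact ⟨by linarith, by linarith⟩
  have h2 : f x ≤ f (x + t) := by
    apply hη
    rw [Real.dist_eq]
    have : t ≤ η/2 := min_le_right _ _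
    rw [abs_lt]; constructor <;> linarith
  linarith

/-- One-dimensional weak minimum principle: boundary sign controls interior sign.
If `-u'' + p u' + c u ≥ 0` on `(a,b)` with `p`, `c` continuous and bounded, `c ≥ 0`,
`u` continuous on `[a,b]` and `C²` on `(a,b)`, and `u(a), u(b) ≥ 0`,
then `u ≥ 0` on all of `[a,b]`. -/
theorem one_dim_weak_minimum_principle
    (a b : ℝ) (hab : a < b)
    (p c : ℝ → ℝ)
    (hp_cont : ContinuousOn p (Set.Ioo a b)) (hc_cont : ContinuousOn c (Set.Ioo a b))
    (hp_bdd : ∃ M, ∀ x ∈ Set.Ioo a b, |p x| ≤ M)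
    (hc_bdd : ∃ M, ∀ x ∈ Set.Ioo a b, |c x| ≤ M)
    (hc_nonneg : ∀ x ∈ Set.Ioo a b, 0 ≤ c x)
    (u : ℝ → ℝ)
    (hu_cont : ContinuousOn u (Set.Icc a b))
    (hu_smooth : ContDiffOn ℝ 2 u (Set.Ioo a b))
    (hineq : ∀ x ∈ Set.Ioo a b, 0 ≤ -(deriv (deriv u) x) + p x * deriv u x + c x * u x)
    (hua : 0 ≤ u a) (hub : 0 ≤ u b) :
    ∀ x ∈ Set.Icc a b, 0 ≤ u x := by
  obtain ⟨Mp, hMp⟩ := hp_bdd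
  obtain ⟨Mc, hMc⟩ := hc_bdd
  set M : ℝ := max (max Mp Mc) 0 with hM
  have hM0 : 0 ≤ M := le_max_right _ _
  set α : ℝ := M + 1 with hα
  have hα0 : 0 < α := by positivity
  have hpM : ∀ x ∈ Set.Ioo a b, p x ≤ M := fun x hx =>
    le_trans (le_abs_self _) (le_trans (hMp x hx) (le_trans (le_max_left _ _) (le_max_left _ _)))
  have hcM : ∀ x ∈ Set.Ioo a b, c x ≤ M := fun x hx =>
    le_trans (le_abs_self _) (le_trans (hMc x hx) (le_trans (le_max_right _ _) (le_max_left _ _)))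
  -- differentiability facts
  have hdu : ∀ y ∈ Set.Ioo a b, HasDerivAt u (deriv u y) y := by
    intro y hy
    exact ((hu_smooth.differentiableOn (by norm_num)).differentiableAt
      (isOpen_Ioo.mem_nhds hy)).hasDerivAt
  have hdu1 : ContDiffOn ℝ 1 (deriv u) (Set.Ioo a b) :=
    hu_smooth.deriv_of_isOpen (m := 1) isOpen_Ioo (by norm_num)
  have hddu : ∀ y ∈ Set.Ioo a b, HasDerivAt (deriv u) (deriv (deriv u) y) y := by
    intro y hy
    exact ((hdu1.differentiableOn (by norm_num)).differentiableAt
      (isOpen_Ioo.mem_nhds hy)).hasDerivAt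
  have hddu_cont : ContinuousOn (deriv (deriv u)) (Set.Ioo a b) :=
    (hdu1.deriv_of_isOpen (m := 0) isOpen_Ioo (by norm_num)).continuousOn
  -- key estimate for each ε > 0
  have key : ∀ ε : ℝ, 0 < ε → ∀ x ∈ Set.Icc a b, -(ε * Real.exp (α * b)) ≤ u x := by
    intro ε hε
    set v : ℝ → ℝ := fun y => u y - ε * Real.exp (α * y) with hv
    have hv_cont : ContinuousOn v (Set.Icc a b) :=
      hu_cont.sub ((continuous_const.mul ((continuous_const.mul continuous_id).rexp)).continuousOn)
    obtain ⟨x1, hx1, hmin⟩ := isCompact_Icc.exists_isMinOn (Set.nonempty_Icc.2 hab.le) hv_cont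
    set g : ℝ → ℝ := fun y => deriv u y - ε * (Real.exp (α * y) * α) with hg
    set g' : ℝ → ℝ := fun y => deriv (deriv u) y - ε * (Real.exp (α * y) * α * α) with hg'
    have hexp : ∀ y : ℝ, HasDerivAt (fun z => Real.exp (α * z)) (Real.exp (α * y) * α) y := by
      intro y
      simpa using ((hasDerivAt_id y).const_mul α).exp
    have hfd : ∀ y ∈ Set.Ioo a b, HasDerivAt v (g y) y := fun y hy =>
      (hdu y hy).sub ((hexp y).const_mul ε)
    have hgd : ∀ y ∈ Set.Ioo a b, HasDerivAt g (g' y) y := fun y hy =>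
      (hddu y hy).sub (((hexp y).mul_const α).const_mul ε)
    have hg'c : ContinuousOn g' (Set.Ioo a b) := by
      apply hddu_cont.sub
      exact (continuous_const.mul
        (((continuous_const.mul continuous_id).rexp.mul continuous_const).mul
          continuous_const)).continuousOn
    -- the minimum value of v is at least -(ε * exp (α b))
    have hbound : -(ε * Real.exp (α * b)) ≤ v x1 := by
      rcases le_or_gt 0 (v x1) with h0 | h0
      · have : 0 < ε * Real.exp (α * b) := by positivity
        linarith
      by_cases hio : x1 ∈ Set.Ioo a b
      · -- interior negative minimum: contradiction
        exfalso
        have hloc : IsLocalMin v x1 := hmin.isLocalMin (Icc_mem_nhds hio.1 hio.2)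
        have hg0 : g x1 = 0 := by
          have := hloc.deriv_eq_zero
          rwa [(hfd x1 hio).deriv] at this
        have hg'0 : 0 ≤ g' x1 :=
          second_nonneg_of_isLocalMin isOpen_Ioo hio hfd hgd hg'c hloc
        have h0' := hineq x1 hio
        have hE : 0 < Real.exp (α * x1) := Real.exp_pos _
        have hdu_eq : deriv u x1 = ε * (Real.exp (α * x1) * α) := by
          have : deriv u x1 - ε * (Real.exp (α * x1) * α) = 0 := hg0
          linarith
        have hddu_ge : ε * (Real.exp (α * x1) * α * α) ≤ deriv (deriv u) x1 := by
          have : (0:ℝ) ≤ deriv (deriv u) x1 - ε * (Real.exp (α * x1) * α * α) := hg'0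
          linarith
        have hu_eq : u x1 = v x1 + ε * Real.exp (α * x1) := by simp [hv]
        have hp1 : p x1 ≤ M := hpM x1 hio
        have hc1 : c x1 ≤ M := hcM x1 hio
        have hc0 : 0 ≤ c x1 := hc_nonneg x1 hio
        -- p x1 * deriv u x1 ≤ M * (ε * (E * α))
        have e1 : p x1 * deriv u x1 ≤ M * (ε * (Real.exp (α * x1) * α)) := by
          rw [hdu_eq]
          apply mul_le_mul_of_nonneg_right hp1 (by positivity)
        have e2 : c x1 * u x1 ≤ M * (ε * Real.exp (α * x1)) := by
          rw [hu_eq, mul_add]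
          have e2a : c x1 * v x1 ≤ 0 := mul_nonpos_of_nonneg_of_nonpos hc0 h0.le
          have e2b : c x1 * (ε * Real.exp (α * x1)) ≤ M * (ε * Real.exp (α * x1)) :=
            mul_le_mul_of_nonneg_right hc1 (by positivity)
          linarith
        have hαdef : α * α = M * α + M + 1 := by rw [hα]; ring
        nlinarith [mul_pos hε hE]
      · -- x1 is an endpoint
        have hx1' : x1 = a ∨ x1 = b := by
          rcases hx1 with ⟨h1, h2⟩
          rcases eq_or_lt_of_le h1 with h | h
          · exact Or.inl h.symm
          rcases eq_or_lt_of_le h2 with h' | h'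
          · exact Or.inr h'
          · exact absurd ⟨h, h'⟩ hio
        have hux1 : 0 ≤ u x1 := by rcases hx1' with h | h <;> rw [h] <;> assumption
        have hexp_le : Real.exp (α * x1) ≤ Real.exp (α * b) := by
          apply Real.exp_le_exp.2
          exact mul_le_mul_of_nonneg_left hx1.2 hα0.le
        have : ε * Real.exp (α * x1) ≤ ε * Real.exp (α * b) :=
          mul_le_mul_of_nonneg_left hexp_le hε.le
        simp only [hv]
        linarith
    intro x hx
    have h1 : v x1 ≤ v x := hmin hx
    have h2 : 0 < ε * Real.exp (α * x) := by positivity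
    have : v x = u x - ε * Real.exp (α * x) := rfl
    linarith
  -- conclude
  intro x hx
  by_contra h
  push_neg at h
  set E := Real.exp (α * b) with hE
  have hEpos : 0 < E := Real.exp_pos _
  have hεpos : 0 < -u x / (2 * E) := div_pos (by linarith) (by positivity)
  have := key (-u x / (2 * E)) hεpos x hx
  have hcalc : -u x / (2 * E) * E = -u x / 2 := by field_simp
  rw [hcalc] at this
  linarith
end

section
/- (Green's function on the Rindler horizon, d = 4.) Define G : (0,∞) → ℝ by G(χ) = −(1/(2π)) · (1 + cosh(χ) · ln(sinh(χ)/(1 + cosh(χ)))). Then: (i) for all χ > 0, (d/dχ)(sinh(χ) · G′(χ)) = 2 · sinh(χ) · G(χ); (ii) G(χ) → 0 as χ → ∞; (iii) lim_{χ→0⁺} 2π · sinh(χ) · G′(χ) = −1. -/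
open Real Filter

noncomputable def Laux (x : ℝ) : ℝ := Real.log (Real.sinh x / (1 + Real.cosh x))

lemma one_add_cosh_pos (x : ℝ) : 0 < 1 + Real.cosh x := by
  have := Real.cosh_pos x; linarith

lemma Laux_eq {x : ℝ} (hx : 0 < x) :
    Laux x = Real.log (Real.sinh x) - Real.log (1 + Real.cosh x) :=
  Real.log_div (ne_of_gt (Real.sinh_pos_iff.mpr hx)) (ne_of_gt (one_add_cosh_pos x))

lemma hasDerivAt_Laux {x : ℝ} (hx : 0 < x) : HasDerivAt Laux (1 / Real.sinh x) x := by
  have hs : Real.sinh x ≠ 0 := ne_of_gt (Real.sinh_pos_iff.mpr hx)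
  have hc : (1 : ℝ) + Real.cosh x ≠ 0 := ne_of_gt (one_add_cosh_pos x)
  have h1 : HasDerivAt (fun y => Real.log (Real.sinh y)) (Real.cosh x / Real.sinh x) x :=
    (Real.hasDerivAt_sinh x).log hs
  have h2 : HasDerivAt (fun y => Real.log (1 + Real.cosh y))
      (Real.sinh x / (1 + Real.cosh x)) x :=
    ((Real.hasDerivAt_cosh x).const_add 1).log hc
  have h3 := h1.sub h2
  have heq : Laux =ᶠ[nhds x] fun y =>
      Real.log (Real.sinh y) - Real.log (1 + Real.cosh y) := by
    filter_upwards [IsOpen.mem_nhds isOpen_Ioi hx] with y hy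
    exact Laux_eq hy
  have h4 := HasDerivAt.congr_of_eventuallyEq h3 heq
  refine h4.congr_deriv ?_
  have hsq := Real.cosh_sq x
  field_simp
  nlinarith [hsq]

lemma hasDerivAt_G (G : ℝ → ℝ)
    (hG : ∀ χ : ℝ, G χ = -(1 / (2 * π)) * (1 + Real.cosh χ * Laux χ))
    {x : ℝ} (hx : 0 < x) :
    HasDerivAt G (-(1 / (2 * π)) *
      (Real.sinh x * Laux x + Real.cosh x * (1 / Real.sinh x))) x := by
  have hGfun : G = fun χ => -(1 / (2 * π)) * (1 + Real.cosh χ * Laux χ) := funext hG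
  rw [hGfun]
  exact (((Real.hasDerivAt_cosh x).mul (hasDerivAt_Laux hx)).const_add 1).const_mul _

/-- The Dirichlet Green's function of `D² - (d-2)/l²` on the Rindler horizon for `d = 4`:
`G(χ) = -(1/2π)(1 + cosh χ · ln(sinh χ / (1 + cosh χ)))` satisfies the radial ODE
`(sinh χ · G')' = 2 sinh χ · G` for `χ > 0`, vanishes as `χ → ∞`, and has the
delta-function normalization `lim_{χ→0⁺} 2π sinh χ · G'(χ) = -1`. -/
theorem greens_function_rindler_d4 (G : ℝ → ℝ)
    (hG : ∀ χ : ℝ, G χ = -(1 / (2 * π)) *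
      (1 + Real.cosh χ * Real.log (Real.sinh χ / (1 + Real.cosh χ)))) :
    (∀ χ : ℝ, 0 < χ →
      deriv (fun x => Real.sinh x * deriv G x) χ = 2 * Real.sinh χ * G χ) ∧
    Tendsto G atTop (nhds 0) ∧
    Tendsto (fun χ => 2 * π * Real.sinh χ * deriv G χ)
      (nhdsWithin 0 (Set.Ioi 0)) (nhds (-1)) := by
  have hG' : ∀ χ : ℝ, G χ = -(1 / (2 * π)) * (1 + Real.cosh χ * Laux χ) := hG
  have hderiv : ∀ x : ℝ, 0 < x → deriv G x =
      -(1 / (2 * π)) * (Real.sinh x * Laux x + Real.cosh x * (1 / Real.sinh x)) :=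
    fun x hx => (hasDerivAt_G G hG' hx).deriv
  have hπ : (π : ℝ) ≠ 0 := Real.pi_ne_zero
  have hkey : ∀ x : ℝ, 0 < x → Real.sinh x * deriv G x =
      -(1 / (2 * π)) * (Real.sinh x ^ 2 * Laux x + Real.cosh x) := by
    intro x hx
    have hs : Real.sinh x ≠ 0 := ne_of_gt (Real.sinh_pos_iff.mpr hx)
    rw [hderiv x hx]; field_simp
  refine ⟨?_, ?_, ?_⟩
  · -- the ODE
    intro χ hχ
    have heq : (fun x => Real.sinh x * deriv G x) =ᶠ[nhds χ]
        fun x => -(1 / (2 * π)) * (Real.sinh x ^ 2 * Laux x + Real.cosh x) := by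
      filter_upwards [IsOpen.mem_nhds isOpen_Ioi hχ] with y hy
      exact hkey y hy
    rw [heq.deriv_eq]
    have hs : Real.sinh χ ≠ 0 := ne_of_gt (Real.sinh_pos_iff.mpr hχ)
    have hD : HasDerivAt (fun x => -(1 / (2 * π)) * (Real.sinh x ^ 2 * Laux x + Real.cosh x))
        (-(1 / (2 * π)) * (((2 : ℕ) * Real.sinh χ ^ (2 - 1) * Real.cosh χ) * Laux χ
          + Real.sinh χ ^ 2 * (1 / Real.sinh χ) + Real.sinh χ)) χ :=
      ((((Real.hasDerivAt_sinh χ).pow 2).mul (hasDerivAt_Laux hχ)).add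
        (Real.hasDerivAt_cosh χ)).const_mul _
    rw [hD.deriv, hG' χ]
    field_simp
    ring
  · -- vanishing at infinity
    set h : ℝ → ℝ := fun t => Real.log (1 - t) - Real.log (1 + t) with hh_def
    have hh : HasDerivAt h (-2) 0 := by
      have h1 : HasDerivAt (fun t : ℝ => Real.log (1 - t)) (-1 / (1 - 0)) 0 :=
        ((hasDerivAt_id (0:ℝ)).const_sub 1).log (by norm_num)
      have h2 : HasDerivAt (fun t : ℝ => Real.log (1 + t)) (1 / (1 + 0)) 0 :=
        ((hasDerivAt_id (0:ℝ)).const_add 1).log (by norm_num)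
      have h3 := h1.sub h2
      refine h3.congr_deriv ?_
      norm_num
    have hslope : Tendsto (slope h 0) (nhdsWithin 0 (Set.Ioi 0)) (nhds (-2)) :=
      (hasDerivAt_iff_tendsto_slope.mp hh).mono_left
        (nhdsWithin_mono 0 (fun y hy => ne_of_gt hy))
    have hhalf : Tendsto (fun t : ℝ => (1 + t ^ 2) / 2)
        (nhdsWithin 0 (Set.Ioi 0)) (nhds ((1 + (0:ℝ) ^ 2) / 2)) := by
      exact (Continuous.tendsto (by fun_prop) 0).mono_left nhdsWithin_le_nhds
    have hf : Tendsto (fun t : ℝ => (1 + t ^ 2) / (2 * t) *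
        (Real.log (1 - t) - Real.log (1 + t))) (nhdsWithin 0 (Set.Ioi 0)) (nhds (-1)) := by
      have hmul := hhalf.mul hslope
      have hval : (1 + (0:ℝ) ^ 2) / 2 * (-2) = -1 := by norm_num
      rw [hval] at hmul
      refine hmul.congr' ?_
      filter_upwards [self_mem_nhdsWithin] with t ht
      have ht0 : (t : ℝ) ≠ 0 := ne_of_gt ht
      rw [slope_def_field]
      have h0 : h 0 = 0 := by simp [hh_def]
      rw [h0]
      simp only [hh_def]
      field_simp
      ring
    have hexp : Tendsto (fun χ : ℝ => Real.exp (-χ)) atTop (nhdsWithin 0 (Set.Ioi 0)) := by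
      refine tendsto_nhdsWithin_of_tendsto_nhds_of_eventually_within _
        Real.tendsto_exp_neg_atTop_nhds_zero ?_
      exact Eventually.of_forall fun x => Real.exp_pos _
    have hcomp : Tendsto (fun χ : ℝ => (1 + Real.exp (-χ) ^ 2) / (2 * Real.exp (-χ)) *
        (Real.log (1 - Real.exp (-χ)) - Real.log (1 + Real.exp (-χ)))) atTop (nhds (-1)) :=
      hf.comp hexp
    have hcont : Tendsto (fun y : ℝ => -(1 / (2 * π)) * (1 + y)) (nhds (-1)) (nhds 0) := by
      have := (Continuous.tendsto (by fun_prop :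
        Continuous (fun y : ℝ => -(1 / (2 * π)) * (1 + y))) (-1))
      simpa using this
    have hfinal := hcont.comp hcomp
    refine hfinal.congr' ?_
    filter_upwards [eventually_gt_atTop (0:ℝ)] with χ hχ
    have ht : Real.exp (-χ) ∈ Set.Ioo (0:ℝ) 1 :=
      ⟨Real.exp_pos _, Real.exp_lt_one_iff.mpr (by linarith)⟩
    set t := Real.exp (-χ) with htdef
    have htne : t ≠ 0 := ne_of_gt ht.1
    have h1t : (1 : ℝ) - t ≠ 0 := by have := ht.2; intro hc; linarith [ht.2]
    have hexpχ : Real.exp χ = t⁻¹ := by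
      rw [htdef, ← Real.exp_neg, neg_neg]
    -- cosh χ = (1 + t²)/(2t)
    have hcosh : Real.cosh χ = (1 + t ^ 2) / (2 * t) := by
      rw [Real.cosh_eq, hexpχ, ← htdef]
      field_simp
    -- sinh/(1+cosh) = (1-t)/(1+t)
    have hq : Real.sinh χ / (1 + Real.cosh χ) = (1 - t) / (1 + t) := by
      rw [Real.sinh_eq, Real.cosh_eq, hexpχ, ← htdef]
      have h1t' : (1 : ℝ) + t ≠ 0 := by linarith [ht.1]
      rw [div_div, div_eq_div_iff (by have := ht.1; positivity) h1t']
      field_simp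
      ring
    have hlog : Real.log (Real.sinh χ / (1 + Real.cosh χ)) =
        Real.log (1 - t) - Real.log (1 + t) := by
      rw [hq, Real.log_div h1t (by linarith [ht.1])]
    show -(1 / (2 * π)) * (1 + (1 + t ^ 2) / (2 * t) *
        (Real.log (1 - t) - Real.log (1 + t))) = G χ
    rw [hG χ, hlog, hcosh]
  · -- normalization
    have hform : ∀ x : ℝ, 0 < x → 2 * π * Real.sinh x * deriv G x =
        -(Real.sinh x ^ 2 * Laux x + Real.cosh x) := by
      intro x hx
      have hs : Real.sinh x ≠ 0 := ne_of_gt (Real.sinh_pos_iff.mpr hx)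
      rw [hderiv x hx]
      field_simp
    have hsinh_within : Tendsto Real.sinh (nhdsWithin 0 (Set.Ioi 0))
        (nhdsWithin 0 (Set.Ioi 0)) := by
      refine tendsto_nhdsWithin_of_tendsto_nhds_of_eventually_within _ ?_ ?_
      · have := (Real.continuous_sinh.tendsto 0).mono_left
          (nhdsWithin_le_nhds (s := Set.Ioi (0:ℝ)))
        simpa using this
      · filter_upwards [self_mem_nhdsWithin] with y hy
        exact Real.sinh_pos_iff.mpr hy
    have hlogmul : Tendsto (fun y : ℝ => Real.log y * y ^ (2:ℝ))
        (nhdsWithin 0 (Set.Ioi 0)) (nhds 0) := tendsto_log_mul_rpow_nhdsGT_zero two_pos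
    have h1 : Tendsto (fun x : ℝ => Real.log (Real.sinh x) * Real.sinh x ^ (2:ℝ))
        (nhdsWithin 0 (Set.Ioi 0)) (nhds 0) := hlogmul.comp hsinh_within
    have h2 : Tendsto (fun x : ℝ => Real.sinh x ^ 2 * Real.log (1 + Real.cosh x))
        (nhdsWithin 0 (Set.Ioi 0)) (nhds 0) := by
      have hc : Continuous (fun x : ℝ => Real.sinh x ^ 2 * Real.log (1 + Real.cosh x)) := by
        apply Continuous.mul (by fun_prop)
        exact Continuous.log (by fun_prop) (fun x => ne_of_gt (one_add_cosh_pos x))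
      have := (hc.tendsto 0).mono_left (nhdsWithin_le_nhds (s := Set.Ioi (0:ℝ)))
      simpa using this
    have h3 : Tendsto (fun x : ℝ => Real.cosh x) (nhdsWithin 0 (Set.Ioi 0)) (nhds 1) := by
      have := (Real.continuous_cosh.tendsto 0).mono_left
        (nhdsWithin_le_nhds (s := Set.Ioi (0:ℝ)))
      simpa using this
    have hsum : Tendsto (fun x : ℝ => -((Real.log (Real.sinh x) * Real.sinh x ^ (2:ℝ) -
        Real.sinh x ^ 2 * Real.log (1 + Real.cosh x)) + Real.cosh x))
        (nhdsWithin 0 (Set.Ioi 0)) (nhds (-((0 - 0) + 1))) := ((h1.sub h2).add h3).neg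
    have hval : -(((0:ℝ) - 0) + 1) = -1 := by norm_num
    rw [hval] at hsum
    refine hsum.congr' ?_
    filter_upwards [self_mem_nhdsWithin] with x hx
    have hsp : 0 < Real.sinh x := Real.sinh_pos_iff.mpr hx
    have hr : Real.sinh x ^ (2:ℝ) = Real.sinh x ^ 2 := by
      rw [← Real.rpow_natCast (Real.sinh x) 2]; norm_num
    rw [hr]
    rw [hform x hx, Laux_eq hx]
    ring
end

section
/- (Positivity of the d = 4 Green's function.) For all χ > 0, 1 + cosh(χ) · ln(sinh(χ)/(1 + cosh(χ))) ≤ 0; equivalently, the function G(χ) = −(1/(2π)) · (1 + cosh(χ) · ln(sinh(χ)/(1 + cosh(χ)))) is nonnegative on (0,∞). -/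
open Real

lemma key_log_ineq (q : ℝ) (h0 : 0 < q) (h1 : q < 1) :
    2 * q ≤ (1 + q ^ 2) * (Real.log (1 + q) - Real.log (1 - q)) := by
  rcases le_or_gt q (1/2) with hle | hgt
  · have hq1 : |q| < 1 := by rw [abs_of_pos h0]; exact h1
    have hq1' : |(-q)| < 1 := by rwa [abs_neg]
    have A := Real.abs_log_sub_add_sum_range_le hq1 3
    have B := Real.abs_log_sub_add_sum_range_le hq1' 3
    simp [Finset.sum_range_succ, abs_of_pos h0, abs_neg] at A B
    rw [abs_le] at A B
    have e1 : q ^ 4 / (1 - q) ≤ 2 * q ^ 4 := by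
      rw [div_le_iff₀ (by linarith)]
      nlinarith [pow_pos h0 4]
    have hL : 2*q + 2/3*q^3 - 4*q^4 ≤ Real.log (1 + q) - Real.log (1 - q) := by
      nlinarith [A.2, B.1, e1]
    have hM := mul_le_mul_of_nonneg_left hL (show (0:ℝ) ≤ 1 + q^2 by positivity)
    nlinarith [hM, pow_pos h0 3, pow_pos h0 4, pow_pos h0 5, pow_pos h0 6,
      mul_le_mul_of_nonneg_left hle (le_of_lt (pow_pos h0 3)),
      mul_le_mul_of_nonneg_left hle (le_of_lt (pow_pos h0 5))]
  · have h3 : (3 : ℝ) ≤ (1 + q) / (1 - q) := by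
      rw [le_div_iff₀ (by linarith)]; linarith
    have hl : (1 : ℝ) ≤ Real.log (1 + q) - Real.log (1 - q) := by
      have : Real.log (exp 1) ≤ Real.log ((1 + q) / (1 - q)) := by
        apply Real.log_le_log (Real.exp_pos 1)
        calc Real.exp 1 ≤ 3 := by
              have := Real.exp_one_lt_d9; linarith
          _ ≤ (1 + q) / (1 - q) := h3
      rw [Real.log_exp, Real.log_div (by linarith) (by linarith)] at this
      exact this
    nlinarith [sq_nonneg (1 - q), hl]

/-- Positivity of the `d = 4` Green's function on the Rindler horizon: for all `χ > 0`,
`1 + cosh χ · ln(sinh χ / (1 + cosh χ)) ≤ 0`; equivalently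
`G(χ) = -(1/2π)(1 + cosh χ · ln(sinh χ / (1 + cosh χ)))` is nonnegative on `(0,∞)`. -/
theorem greens_function_d4_nonneg :
    ∀ χ : ℝ, 0 < χ →
      1 + Real.cosh χ * Real.log (Real.sinh χ / (1 + Real.cosh χ)) ≤ 0 ∧
      0 ≤ -(1 / (2 * π)) *
        (1 + Real.cosh χ * Real.log (Real.sinh χ / (1 + Real.cosh χ))) := by
  intro χ hχ
  set q : ℝ := Real.exp (-χ) with hqdef
  have hq0 : 0 < q := Real.exp_pos _
  have hq1 : q < 1 := by
    rw [hqdef, Real.exp_lt_one_iff]; linarith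
  have hqe : Real.exp χ = 1 / q := by
    rw [hqdef, one_div, ← Real.exp_neg, neg_neg]
  have hcosh : Real.cosh χ = (1 + q ^ 2) / (2 * q) := by
    rw [Real.cosh_eq, hqe, ← hqdef]; field_simp
  have hsinh : Real.sinh χ = (1 - q ^ 2) / (2 * q) := by
    rw [Real.sinh_eq, hqe, ← hqdef]; field_simp
  have hratio : Real.sinh χ / (1 + Real.cosh χ) = (1 - q) / (1 + q) := by
    rw [hsinh, hcosh]
    rw [div_eq_div_iff (by positivity) (by positivity)]
    field_simp
    ring
  have hlog : Real.log (Real.sinh χ / (1 + Real.cosh χ))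
      = Real.log (1 - q) - Real.log (1 + q) := by
    rw [hratio, Real.log_div (by linarith) (by linarith)]
  have hkey := key_log_ineq q hq0 hq1
  have h1 : 1 + Real.cosh χ * Real.log (Real.sinh χ / (1 + Real.cosh χ)) ≤ 0 := by
    rw [hlog, hcosh]
    have h2q : (0:ℝ) < 2 * q := by linarith
    have heq : 1 + (1 + q ^ 2) / (2 * q) * (Real.log (1 - q) - Real.log (1 + q))
        = (2 * q - (1 + q ^ 2) * (Real.log (1 + q) - Real.log (1 - q))) / (2 * q) := by
      field_simp; ring
    rw [heq]
    exact div_nonpos_of_nonpos_of_nonneg (by linarith) (le_of_lt h2q)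
  refine ⟨h1, ?_⟩
  have hπ : 0 < π := Real.pi_pos
  calc (0:ℝ) ≤ (1 / (2 * π)) *
        (-(1 + Real.cosh χ * Real.log (Real.sinh χ / (1 + Real.cosh χ)))) :=
        mul_nonneg (by positivity) (by linarith)
    _ = -(1 / (2 * π)) *
        (1 + Real.cosh χ * Real.log (Real.sinh χ / (1 + Real.cosh χ))) := by ring
end

section
/- (Green's function on the Rindler horizon, d = 5.) Fix l > 0 and define G : (0,∞) → ℝ by G(χ) = e^{−2χ} / (4π · l · sinh(χ)). Then: (i) for all χ > 0, (d/dχ)(sinh²(χ) · G′(χ)) = 3 · sinh²(χ) · G(χ); (ii) G(χ) → 0 as χ → ∞; (iii) lim_{χ→0⁺} 4π · l · sinh²(χ) · G′(χ) = −1. -/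
open Real Filter

/-- The Dirichlet Green's function of `D² - (d-2)/l²` on the Rindler horizon for `d = 5`:
`G(χ) = e^{-2χ}/(4π l sinh χ)` satisfies the radial ODE
`(sinh² χ · G')' = 3 sinh² χ · G` for `χ > 0`, vanishes as `χ → ∞`, and has the
delta-function normalization `lim_{χ→0⁺} 4π l sinh² χ · G'(χ) = -1`. -/
theorem greens_function_rindler_d5 (l : ℝ) (hl : 0 < l) (G : ℝ → ℝ)
    (hG : ∀ χ : ℝ, G χ = Real.exp (-2 * χ) / (4 * π * l * Real.sinh χ)) :
    (∀ χ : ℝ, 0 < χ →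
      deriv (fun x => Real.sinh x ^ 2 * deriv G x) χ = 3 * Real.sinh χ ^ 2 * G χ) ∧
    Tendsto G atTop (nhds 0) ∧
    Tendsto (fun χ => 4 * π * l * Real.sinh χ ^ 2 * deriv G χ)
      (nhdsWithin 0 (Set.Ioi 0)) (nhds (-1)) := by
  have hpi : (0:ℝ) < π := Real.pi_pos
  have hc : (4 * π * l) ≠ 0 := by positivity
  -- derivative of G at χ ≠ 0
  have hexp : ∀ χ : ℝ, HasDerivAt (fun x => Real.exp (-2*x)) (-2 * Real.exp (-2*χ)) χ := by
    intro χ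
    have h := ((hasDerivAt_id χ).const_mul (-2 : ℝ)).exp
    simpa [mul_comm] using h
  have hderiv : ∀ χ : ℝ, χ ≠ 0 → HasDerivAt G
      (((-2 * Real.exp (-2*χ)) * ((4*π*l) * Real.sinh χ)
        - Real.exp (-2*χ) * ((4*π*l) * Real.cosh χ)) / ((4*π*l) * Real.sinh χ)^2) χ := by
    intro χ hχ
    have hs : Real.sinh χ ≠ 0 := Real.sinh_ne_zero.mpr hχ
    have h2 : HasDerivAt (fun x => (4*π*l) * Real.sinh x) ((4*π*l) * Real.cosh χ) χ :=
      (Real.hasDerivAt_sinh χ).const_mul _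
    have h := (hexp χ).div h2 (mul_ne_zero hc hs)
    exact h.congr_of_eventuallyEq (Filter.Eventually.of_forall fun x => hG x)
  have hsG : ∀ χ : ℝ, χ ≠ 0 →
      Real.sinh χ ^ 2 * deriv G χ
        = -(Real.exp (-2*χ) * (2 * Real.sinh χ + Real.cosh χ)) / (4*π*l) := by
    intro χ hχ
    have hs : Real.sinh χ ≠ 0 := Real.sinh_ne_zero.mpr hχ
    rw [(hderiv χ hχ).deriv]
    field_simp
    ring
  refine ⟨?_, ?_, ?_⟩
  · intro χ hχ
    have hs : Real.sinh χ ≠ 0 := Real.sinh_ne_zero.mpr (ne_of_gt hχ)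
    have heq : (fun x => Real.sinh x ^ 2 * deriv G x)
        =ᶠ[nhds χ] fun x => -(Real.exp (-2*x) * (2 * Real.sinh x + Real.cosh x)) / (4*π*l) := by
      filter_upwards [eventually_ne_nhds (ne_of_gt hχ)] with x hx
      exact hsG x hx
    rw [heq.deriv_eq]
    have hF : HasDerivAt (fun x => -(Real.exp (-2*x) * (2 * Real.sinh x + Real.cosh x)) / (4*π*l))
        (-((-2 * Real.exp (-2*χ)) * (2 * Real.sinh χ + Real.cosh χ)
          + Real.exp (-2*χ) * (2 * Real.cosh χ + Real.sinh χ)) / (4*π*l)) χ := by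
      have h1 : HasDerivAt (fun x => 2 * Real.sinh x + Real.cosh x)
          (2 * Real.cosh χ + Real.sinh χ) χ :=
        ((Real.hasDerivAt_sinh χ).const_mul 2).add (Real.hasDerivAt_cosh χ)
      exact (((hexp χ).mul h1).neg).div_const _
    rw [hF.deriv, hG χ]
    field_simp
    ring
  · have hnum : Tendsto (fun χ : ℝ => Real.exp (-2*χ)) atTop (nhds 0) := by
      have : Tendsto (fun χ : ℝ => -2*χ) atTop atBot := by
        simpa using (tendsto_id (α := ℝ)).const_mul_atTop_of_neg (by norm_num : (-2:ℝ) < 0)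
      exact Real.tendsto_exp_atBot.comp this
    have hsinh : Tendsto Real.sinh atTop atTop := by
      refine tendsto_atTop_mono' atTop ?_ tendsto_id
      filter_upwards [eventually_ge_atTop (0:ℝ)] with x hx
      exact Real.self_le_sinh_iff.mpr hx
    have hden : Tendsto (fun χ : ℝ => (4*π*l) * Real.sinh χ) atTop atTop :=
      hsinh.const_mul_atTop (by positivity)
    have := hnum.div_atTop hden
    exact this.congr fun x => (hG x).symm
  · have hcont : Tendsto (fun χ : ℝ => -(Real.exp (-2*χ) * (2 * Real.sinh χ + Real.cosh χ)))
        (nhdsWithin 0 (Set.Ioi 0)) (nhds (-1)) := by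
      have h0 : Tendsto (fun χ : ℝ => -(Real.exp (-2*χ) * (2 * Real.sinh χ + Real.cosh χ)))
          (nhds 0) (nhds (-1)) := by
        have : ContinuousAt (fun χ : ℝ => -(Real.exp (-2*χ) * (2 * Real.sinh χ + Real.cosh χ))) 0 := by
          fun_prop
        simpa using this.tendsto
      exact h0.mono_left nhdsWithin_le_nhds
    refine hcont.congr' ?_
    filter_upwards [self_mem_nhdsWithin] with x hx
    have hx0 : x ≠ 0 := ne_of_gt hx
    rw [show 4*π*l*Real.sinh x^2*deriv G x = 4*π*l*(Real.sinh x^2*deriv G x) from by ring,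
      hsG x hx0]
    field_simp
end

section
/- (Green's function on the Rindler horizon, d = 6.) Fix l > 0 and define G : (0,∞) → ℝ by G(χ) = (1/(4π² l²)) · (2 + coth²(χ) + 3 cosh(χ) · ln(sinh(χ)/(1 + cosh(χ)))). Then: (i) for all χ > 0, (d/dχ)(sinh³(χ) · G′(χ)) = 4 · sinh³(χ) · G(χ); (ii) G(χ) → 0 as χ → ∞; (iii) lim_{χ→0⁺} 2π² · l² · sinh³(χ) · G′(χ) = −1. -/
open Real Filter Topology

noncomputable def g0 (x : ℝ) : ℝ :=
  2 + (Real.cosh x / Real.sinh x) ^ 2 +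
    3 * Real.cosh x * Real.log (Real.sinh x / (1 + Real.cosh x))

lemma log_ratio_deriv {x : ℝ} (hx : 0 < x) :
    HasDerivAt (fun y => Real.log (Real.sinh y / (1 + Real.cosh y))) (1 / Real.sinh x) x := by
  have hs := Real.sinh_pos_iff.mpr hx
  have hsne : Real.sinh x ≠ 0 := ne_of_gt hs
  have hcpos := Real.cosh_pos (x := x)
  have hc : (0:ℝ) < 1 + Real.cosh x := by linarith
  have hcne : (1 + Real.cosh x) ≠ 0 := ne_of_gt hc
  have hrat : Real.sinh x / (1 + Real.cosh x) ≠ 0 := div_ne_zero hsne hcne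
  have h2 := (Real.hasDerivAt_sinh x).div
      ((hasDerivAt_const x (1:ℝ)).add (Real.hasDerivAt_cosh x)) hcne
  have h3 := h2.log hrat
  refine h3.congr_deriv ?_
  simp only [Pi.add_apply, Pi.div_apply, Pi.pow_apply, Pi.mul_apply]
  have hch : Real.cosh x ^ 2 = Real.sinh x ^ 2 + 1 := Real.cosh_sq x
  field_simp
  linear_combination hch

lemma g0_deriv {x : ℝ} (hx : 0 < x) :
    HasDerivAt g0
      (5 * (Real.cosh x / Real.sinh x) - 2 * (Real.cosh x / Real.sinh x) ^ 3 +
        3 * Real.sinh x * Real.log (Real.sinh x / (1 + Real.cosh x))) x := by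
  have hs := Real.sinh_pos_iff.mpr hx
  have hsne : Real.sinh x ≠ 0 := ne_of_gt hs
  have h1 := ((Real.hasDerivAt_cosh x).div (Real.hasDerivAt_sinh x) hsne).pow 2
  have h4 := (Real.hasDerivAt_cosh x).const_mul (3:ℝ)
  have h5 := h4.mul (log_ratio_deriv hx)
  have h6 := ((hasDerivAt_const x (2:ℝ)).add h1).add h5
  refine h6.congr_deriv ?_
  simp only [Pi.add_apply, Pi.div_apply, Pi.pow_apply, Pi.mul_apply]
  field_simp
  ring_nf
  field_simp
  ring

noncomputable def H0 (x : ℝ) : ℝ :=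
  5 * Real.sinh x ^ 2 * Real.cosh x - 2 * Real.cosh x ^ 3 +
    3 * Real.sinh x ^ 4 * Real.log (Real.sinh x / (1 + Real.cosh x))

lemma H0_deriv {x : ℝ} (hx : 0 < x) :
    HasDerivAt H0 (4 * Real.sinh x ^ 3 * g0 x) x := by
  have hs := Real.sinh_pos_iff.mpr hx
  have hsne : Real.sinh x ≠ 0 := ne_of_gt hs
  have h1 := ((((Real.hasDerivAt_sinh x).pow 2).mul (Real.hasDerivAt_cosh x)).const_mul (5:ℝ))
  have h2 := ((Real.hasDerivAt_cosh x).pow 3).const_mul (2:ℝ)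
  have h3 := ((((Real.hasDerivAt_sinh x).pow 4).mul (log_ratio_deriv hx)).const_mul (3:ℝ))
  have h6 := (h1.sub h2).add h3
  have h7 : H0 = fun y => 5 * (Real.sinh y ^ 2 * Real.cosh y) - 2 * Real.cosh y ^ 3 +
      3 * (Real.sinh y ^ 4 * Real.log (Real.sinh y / (1 + Real.cosh y))) := by
    funext y; unfold H0; ring
  rw [h7]
  refine h6.congr_deriv ?_
  simp only [Pi.add_apply, Pi.div_apply, Pi.pow_apply, Pi.mul_apply]
  unfold g0
  field_simp
  ring

-- eventual equality on Ioi 0: sinh^3 * (g0 deriv) = H0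
lemma sinh_cube_g0' {x : ℝ} (hx : 0 < x) :
    Real.sinh x ^ 3 *
      (5 * (Real.cosh x / Real.sinh x) - 2 * (Real.cosh x / Real.sinh x) ^ 3 +
        3 * Real.sinh x * Real.log (Real.sinh x / (1 + Real.cosh x))) = H0 x := by
  have hsne : Real.sinh x ≠ 0 := ne_of_gt (Real.sinh_pos_iff.mpr hx)
  unfold H0
  field_simp

lemma sinh_atTop : Tendsto Real.sinh atTop atTop := by
  apply tendsto_atTop_mono' atTop
    (show ∀ᶠ x in atTop, Real.exp x / 2 - 1 / 2 ≤ Real.sinh x from ?_)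
  · exact (tendsto_exp_atTop.atTop_div_const two_pos).atTop_add tendsto_const_nhds
  · filter_upwards [eventually_ge_atTop (0:ℝ)] with x hx
    have h1 : Real.exp (-x) ≤ 1 := Real.exp_le_one_iff.mpr (by linarith)
    have := Real.sinh_eq x
    rw [this]; linarith

lemma cosh_atTop : Tendsto Real.cosh atTop atTop := by
  apply tendsto_atTop_mono (fun x => ?_) sinh_atTop
  have := Real.cosh_sub_sinh x
  have := Real.exp_pos (-x)
  linarith

lemma coth_atTop : Tendsto (fun x => Real.cosh x / Real.sinh x) atTop (𝓝 1) := by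
  have h : ∀ᶠ x in atTop, 1 + Real.exp (-x) / Real.sinh x = Real.cosh x / Real.sinh x := by
    filter_upwards [eventually_gt_atTop (0:ℝ)] with x hx
    have hs : Real.sinh x ≠ 0 := ne_of_gt (Real.sinh_pos_iff.mpr hx)
    have hcs := Real.cosh_sub_sinh x
    field_simp
    linarith
  refine Tendsto.congr' h ?_
  have h2 : Tendsto (fun x => Real.exp (-x) / Real.sinh x) atTop (𝓝 0) :=
    Real.tendsto_exp_neg_atTop_nhds_zero.div_atTop sinh_atTop
  simpa using tendsto_const_nhds.add h2

lemma ratio_lt_one (x : ℝ) : Real.sinh x / (1 + Real.cosh x) < 1 := by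
  have hcpos := Real.cosh_pos (x := x)
  have hc : (0:ℝ) < 1 + Real.cosh x := by linarith
  rw [div_lt_one hc]
  have := Real.cosh_sub_sinh x
  have := Real.exp_pos (-x)
  linarith

lemma ratio_tendsto_one :
    Tendsto (fun x => Real.sinh x / (1 + Real.cosh x)) atTop (𝓝 1) := by
  have h : ∀ᶠ x in atTop, 1 - (1 + Real.exp (-x)) / (1 + Real.cosh x)
      = Real.sinh x / (1 + Real.cosh x) := by
    filter_upwards with x
    have hcpos := Real.cosh_pos (x := x)
    have hc : (1 + Real.cosh x) ≠ 0 := by positivity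
    have hcs := Real.cosh_sub_sinh x
    field_simp
    linarith
  refine Tendsto.congr' h ?_
  have h2 : Tendsto (fun x => (1 + Real.exp (-x)) / (1 + Real.cosh x)) atTop (𝓝 0) := by
    have hnum : Tendsto (fun x : ℝ => 1 + Real.exp (-x)) atTop (𝓝 (1:ℝ)) := by
      simpa using tendsto_const_nhds.add Real.tendsto_exp_neg_atTop_nhds_zero
    exact hnum.div_atTop (tendsto_atTop_add_const_left _ _ cosh_atTop)
  simpa using tendsto_const_nhds.sub h2

lemma prod_tendsto :
    Tendsto (fun x => (Real.sinh x / (1 + Real.cosh x) - 1) * Real.cosh x) atTop (𝓝 (-1)) := by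
  have h : ∀ᶠ x in atTop, -((1 + Real.exp (-x)) * (Real.cosh x / (1 + Real.cosh x)))
      = (Real.sinh x / (1 + Real.cosh x) - 1) * Real.cosh x := by
    filter_upwards with x
    have hcpos := Real.cosh_pos (x := x)
    have hc : (1 + Real.cosh x) ≠ 0 := by positivity
    have hcs := Real.cosh_sub_sinh x
    field_simp
    ring_nf
    nlinarith [hcs]
  refine Tendsto.congr' h ?_
  have h1 : Tendsto (fun x => Real.cosh x / (1 + Real.cosh x)) atTop (𝓝 1) := by
    have heq : ∀ᶠ x in atTop, 1 - 1 / (1 + Real.cosh x) = Real.cosh x / (1 + Real.cosh x) := by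
      filter_upwards with x
      have hcpos := Real.cosh_pos (x := x)
      have hc : (1 + Real.cosh x) ≠ 0 := by positivity
      field_simp
      ring
    refine Tendsto.congr' heq ?_
    have hnum : Tendsto (fun _ : ℝ => (1:ℝ)) atTop (𝓝 (1:ℝ)) := tendsto_const_nhds
    have := hnum.div_atTop (tendsto_atTop_add_const_left atTop (1:ℝ) cosh_atTop)
    simpa using tendsto_const_nhds.sub this
  have h2 : Tendsto (fun x => (1 + Real.exp (-x)) * (Real.cosh x / (1 + Real.cosh x)))
      atTop (𝓝 1) := by
    have hnum : Tendsto (fun x : ℝ => 1 + Real.exp (-x)) atTop (𝓝 (1:ℝ)) := by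
      simpa using tendsto_const_nhds.add Real.tendsto_exp_neg_atTop_nhds_zero
    simpa using hnum.mul h1
  simpa using h2.neg

lemma coshlog_tendsto :
    Tendsto (fun x => Real.cosh x * Real.log (Real.sinh x / (1 + Real.cosh x)))
      atTop (𝓝 (-1)) := by
  have hyne : Tendsto (fun x => Real.sinh x / (1 + Real.cosh x)) atTop (𝓝[≠] 1) := by
    rw [tendsto_nhdsWithin_iff]
    exact ⟨ratio_tendsto_one, Filter.Eventually.of_forall fun x => ne_of_lt (ratio_lt_one x)⟩
  have hslope : Tendsto (fun x => slope Real.log 1 (Real.sinh x / (1 + Real.cosh x)))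
      atTop (𝓝 1) := by
    have := (hasDerivAt_iff_tendsto_slope.mp (Real.hasDerivAt_log one_ne_zero)).comp hyne
    simp at this; exact this
  have hmul := hslope.mul prod_tendsto
  rw [show (1:ℝ) * (-1) = -1 by ring] at hmul
  refine Tendsto.congr' ?_ hmul
  filter_upwards with x
  set t := Real.sinh x / (1 + Real.cosh x) with ht
  have hne : t - 1 ≠ 0 := sub_ne_zero.mpr (ne_of_lt (ratio_lt_one x))
  rw [slope_def_field, Real.log_one]
  field_simp
  ring

lemma H0_tendsto : Tendsto H0 (𝓝[>] (0:ℝ)) (𝓝 (-2)) := by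
  have hA : Tendsto (fun x => Real.sinh x ^ 4 * Real.log (Real.sinh x)) (𝓝[>] (0:ℝ)) (𝓝 0) := by
    have hsinh : Tendsto Real.sinh (𝓝[>] (0:ℝ)) (𝓝[>] (0:ℝ)) := by
      rw [tendsto_nhdsWithin_iff]
      constructor
      · have := Real.continuous_sinh.tendsto 0
        simpa using this.mono_left nhdsWithin_le_nhds
      · filter_upwards [self_mem_nhdsWithin] with x hx
        exact Real.sinh_pos_iff.mpr hx
    have hbase := (tendsto_log_mul_rpow_nhdsGT_zero (r := (4:ℝ)) (by norm_num)).comp hsinh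
    refine Tendsto.congr' ?_ hbase
    filter_upwards [self_mem_nhdsWithin] with x hx
    have hs : (0:ℝ) < Real.sinh x := Real.sinh_pos_iff.mpr hx
    simp only [Function.comp]
    rw [show ((4:ℝ)) = ((4:ℕ):ℝ) by norm_num, Real.rpow_natCast]
    ring
  have hB : Tendsto (fun x => Real.sinh x ^ 4 * Real.log (1 + Real.cosh x))
      (𝓝[>] (0:ℝ)) (𝓝 0) := by
    have h1 : Tendsto (fun x => Real.sinh x ^ 4) (𝓝 (0:ℝ)) (𝓝 0) := by
      have := (Real.continuous_sinh.pow 4).tendsto 0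
      simp at this; exact this
    have h2 : Tendsto (fun x => Real.log (1 + Real.cosh x)) (𝓝 (0:ℝ)) (𝓝 (Real.log 2)) := by
      have hco : Tendsto (fun x => 1 + Real.cosh x) (𝓝 (0:ℝ)) (𝓝 2) := by
        have hcc : Continuous (fun x : ℝ => 1 + Real.cosh x) :=
          continuous_const.add Real.continuous_cosh
        have := hcc.tendsto 0
        norm_num [Real.cosh_zero] at this; exact this
      exact (Real.continuousAt_log (by norm_num)).tendsto.comp hco
    have := h1.mul h2
    simpa using this.mono_left nhdsWithin_le_nhds
  have hL : Tendsto (fun x => 3 * Real.sinh x ^ 4 *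
      Real.log (Real.sinh x / (1 + Real.cosh x))) (𝓝[>] (0:ℝ)) (𝓝 0) := by
    have := ((hA.sub hB).const_mul (3:ℝ))
    rw [show ((3:ℝ) * (0 - 0)) = 0 by ring] at this
    refine Tendsto.congr' ?_ this
    filter_upwards [self_mem_nhdsWithin] with x hx
    have hs : Real.sinh x ≠ 0 := ne_of_gt (Real.sinh_pos_iff.mpr hx)
    have hcpos := Real.cosh_pos (x := x)
    have hc : (1 + Real.cosh x) ≠ 0 := by positivity
    rw [Real.log_div hs hc]
    ring
  have hcont : Tendsto (fun x => 5 * Real.sinh x ^ 2 * Real.cosh x - 2 * Real.cosh x ^ 3)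
      (𝓝[>] (0:ℝ)) (𝓝 (-2)) := by
    have : Continuous (fun x => 5 * Real.sinh x ^ 2 * Real.cosh x - 2 * Real.cosh x ^ 3) := by
      continuity
    have h0 := this.tendsto 0
    simp only [Real.sinh_zero, Real.cosh_zero] at h0
    norm_num at h0
    exact h0.mono_left nhdsWithin_le_nhds
  have := hcont.add hL
  rw [show ((-2:ℝ) + 0) = -2 by ring] at this
  refine Tendsto.congr ?_ this
  intro x
  unfold H0
  ring

/-- The Dirichlet Green's function of `D² - (d-2)/l²` on the Rindler horizon for `d = 6`:
`G(χ) = (1/(4π²l²))(2 + coth² χ + 3 cosh χ · ln(sinh χ/(1+cosh χ)))` satisfies the radial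
ODE `(sinh³ χ · G')' = 4 sinh³ χ · G` for `χ > 0`, vanishes as `χ → ∞`, and has the
delta-function normalization `lim_{χ→0⁺} 2π² l² sinh³ χ · G'(χ) = -1`. -/
theorem greens_function_rindler_d6 (l : ℝ) (hl : 0 < l) (G : ℝ → ℝ)
    (hG : ∀ χ : ℝ, G χ = (1 / (4 * π ^ 2 * l ^ 2)) *
      (2 + (Real.cosh χ / Real.sinh χ) ^ 2 +
        3 * Real.cosh χ * Real.log (Real.sinh χ / (1 + Real.cosh χ)))) :
    (∀ χ : ℝ, 0 < χ →
      deriv (fun x => Real.sinh x ^ 3 * deriv G x) χ = 4 * Real.sinh χ ^ 3 * G χ) ∧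
    Tendsto G atTop (nhds 0) ∧
    Tendsto (fun χ => 2 * π ^ 2 * l ^ 2 * Real.sinh χ ^ 3 * deriv G χ)
      (nhdsWithin 0 (Set.Ioi 0)) (nhds (-1)) := by
  have hπ : π ≠ 0 := Real.pi_ne_zero
  have hlne : l ≠ 0 := ne_of_gt hl
  set c : ℝ := 1 / (4 * π ^ 2 * l ^ 2) with hc
  have hGfun : G = fun x => c * g0 x := funext fun x => by rw [hG x]; rfl
  have hderivG : ∀ x : ℝ, 0 < x → deriv G x =
      c * (5 * (Real.cosh x / Real.sinh x) - 2 * (Real.cosh x / Real.sinh x) ^ 3 +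
        3 * Real.sinh x * Real.log (Real.sinh x / (1 + Real.cosh x))) := by
    intro x hx
    rw [hGfun]
    exact ((g0_deriv hx).const_mul c).deriv
  refine ⟨?_, ?_, ?_⟩
  · intro χ hχ
    have hev : (fun x => Real.sinh x ^ 3 * deriv G x) =ᶠ[𝓝 χ] fun x => c * H0 x := by
      filter_upwards [Ioi_mem_nhds hχ] with x hx
      rw [hderivG x hx, ← sinh_cube_g0' hx]
      ring
    rw [hev.deriv_eq, ((H0_deriv hχ).const_mul c).deriv, hGfun]
    ring
  · rw [hGfun]
    have h1 := coth_atTop.pow 2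
    have h2 := coshlog_tendsto.const_mul (3:ℝ)
    have h3 := (tendsto_const_nhds (x := (2:ℝ)) (f := atTop)).add (h1.add h2)
    have h4 : Tendsto g0 atTop (𝓝 (2 + ((1:ℝ) ^ 2 + 3 * (-1)))) := by
      refine Tendsto.congr (fun x => ?_) h3
      unfold g0
      ring
    norm_num at h4
    have := h4.const_mul c
    simpa using this
  · have hev2 : (fun χ => 2 * π ^ 2 * l ^ 2 * Real.sinh χ ^ 3 * deriv G χ)
        =ᶠ[𝓝[>] (0:ℝ)] fun χ => (1/2 : ℝ) * H0 χ := by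
      filter_upwards [self_mem_nhdsWithin] with x hx
      rw [hderivG x hx, ← sinh_cube_g0' hx, hc]
      field_simp
      ring
    have := H0_tendsto.const_mul (1/2 : ℝ)
    rw [show ((1/2 : ℝ) * (-2)) = -1 by norm_num] at this
    exact Tendsto.congr' hev2.symm this
end

section
/- (Positivity of the d = 6 Green's function.) For all χ > 0, 2 + coth²(χ) + 3 cosh(χ) · ln(sinh(χ)/(1 + cosh(χ))) ≥ 0; equivalently, the function G(χ) = (1/(4π² l²)) · (2 + coth²(χ) + 3 cosh(χ) · ln(sinh(χ)/(1 + cosh(χ)))) is nonnegative on (0,∞) for any l > 0. -/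
open Real

/-- `sinh y ≤ y` for `y ≤ 0`. -/
lemma my_sinh_le_self {y : ℝ} (hy : y ≤ 0) : Real.sinh y ≤ y := by
  rcases lt_or_eq_of_le hy with h | h
  · have h2 : -y < Real.sinh (-y) := Real.self_lt_sinh_iff.mpr (by linarith)
    rw [Real.sinh_neg] at h2
    linarith
  · simp [h]

/-- logarithm lower bound: `u² - 1 ≤ 2u·log u` for `0 < u ≤ 1`. -/
lemma my_log_lb {u : ℝ} (hu : 0 < u) (hu1 : u ≤ 1) : u ^ 2 - 1 ≤ 2 * u * Real.log u := by
  have hlog : Real.log u ≤ 0 := Real.log_nonpos hu.le (by linarith)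
  have hsl := Real.sinh_log hu
  have h1 : Real.sinh (Real.log u) ≤ Real.log u := my_sinh_le_self hlog
  rw [hsl] at h1
  have huinv : u * u⁻¹ = 1 := mul_inv_cancel₀ hu.ne'
  nlinarith [mul_le_mul_of_nonneg_left h1 hu.le]

/-- `0 < 1 - u⁴ + 4u²·log u` for `0 < u < 1`. -/
lemma my_h3_pos {u : ℝ} (hu : 0 < u) (hu1 : u < 1) :
    0 < 1 - u ^ 4 + 4 * u ^ 2 * Real.log u := by
  have hA := my_log_lb hu hu1.le
  have h2 : 2 * u * (u ^ 2 - 1) ≤ 2 * u * (2 * u * Real.log u) :=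
    mul_le_mul_of_nonneg_left hA (by positivity)
  nlinarith [pow_pos (show (0:ℝ) < 1 - u by linarith) 3]

noncomputable def myF2 : ℝ → ℝ := fun t => (1 - t ^ 2) * (t ^ 2 + 5) + 4 * (1 + 2 * t ^ 2) * Real.log t

noncomputable def myF1 : ℝ → ℝ :=
  fun t => (1 - t ^ 2) * (t ^ 4 + 10 * t ^ 2 + 1) + 12 * t ^ 2 * (1 + t ^ 2) * Real.log t

lemma myF2_hasDeriv {x : ℝ} (hx : 0 < x) :
    HasDerivAt myF2 ((4 / x) * (1 - x ^ 4 + 4 * x ^ 2 * Real.log x)) x := by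
  have hp : HasDerivAt (fun t : ℝ => t ^ 2) (2 * x) x := by
    simpa using hasDerivAt_pow 2 x
  have d1 : HasDerivAt (fun t : ℝ => (1 - t ^ 2) * (t ^ 2 + 5))
      ((-(2 * x)) * (x ^ 2 + 5) + (1 - x ^ 2) * (2 * x)) x :=
    (hp.const_sub 1).mul (hp.add_const 5)
  have d2a : HasDerivAt (fun t : ℝ => 4 * (1 + 2 * t ^ 2)) (4 * (2 * (2 * x))) x :=
    ((hp.const_mul 2).const_add 1).const_mul 4
  have d2 : HasDerivAt (fun t : ℝ => 4 * (1 + 2 * t ^ 2) * Real.log t)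
      (4 * (2 * (2 * x)) * Real.log x + 4 * (1 + 2 * x ^ 2) * x⁻¹) x :=
    d2a.mul (Real.hasDerivAt_log hx.ne')
  have := d1.add d2
  refine HasDerivAt.congr_deriv (f := myF2) this ?_
  field_simp
  ring

lemma myF1_hasDeriv {x : ℝ} (hx : 0 < x) :
    HasDerivAt myF1 (6 * x * myF2 x) x := by
  have hp : HasDerivAt (fun t : ℝ => t ^ 2) (2 * x) x := by
    simpa using hasDerivAt_pow 2 x
  have hp4 : HasDerivAt (fun t : ℝ => t ^ 4) (4 * x ^ 3) x := by
    simpa using hasDerivAt_pow 4 x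
  have d1 : HasDerivAt (fun t : ℝ => (1 - t ^ 2) * (t ^ 4 + 10 * t ^ 2 + 1))
      ((-(2 * x)) * (x ^ 4 + 10 * x ^ 2 + 1) + (1 - x ^ 2) * (4 * x ^ 3 + 10 * (2 * x))) x :=
    (hp.const_sub 1).mul ((hp4.add (hp.const_mul 10)).add_const 1)
  have d2a : HasDerivAt (fun t : ℝ => 12 * t ^ 2 * (1 + t ^ 2))
      ((12 * (2 * x)) * (1 + x ^ 2) + 12 * x ^ 2 * (2 * x)) x :=
    (hp.const_mul 12).mul (hp.const_add 1)
  have d2 : HasDerivAt (fun t : ℝ => 12 * t ^ 2 * (1 + t ^ 2) * Real.log t)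
      (((12 * (2 * x)) * (1 + x ^ 2) + 12 * x ^ 2 * (2 * x)) * Real.log x
        + 12 * x ^ 2 * (1 + x ^ 2) * x⁻¹) x :=
    d2a.mul (Real.hasDerivAt_log hx.ne')
  have := d1.add d2
  refine HasDerivAt.congr_deriv (f := myF1) this ?_
  unfold myF2
  field_simp
  ring

lemma myF2_contOn : ContinuousOn myF2 (Set.Ioc 0 1) := by
  apply ContinuousOn.add
  · exact (Continuous.continuousOn (by continuity))
  · exact ContinuousOn.mul (Continuous.continuousOn (by continuity))
      (Real.continuousOn_log.mono (fun x hx => by simp [ne_of_gt hx.1]))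

lemma myF1_contOn : ContinuousOn myF1 (Set.Ioc 0 1) := by
  apply ContinuousOn.add
  · exact (Continuous.continuousOn (by continuity))
  · exact ContinuousOn.mul (Continuous.continuousOn (by continuity))
      (Real.continuousOn_log.mono (fun x hx => by simp [ne_of_gt hx.1]))

lemma myF2_nonpos {t : ℝ} (ht : 0 < t) (ht1 : t ≤ 1) : myF2 t ≤ 0 := by
  have hmono : StrictMonoOn myF2 (Set.Ioc 0 1) := by
    apply strictMonoOn_of_deriv_pos (convex_Ioc 0 1) myF2_contOn
    intro x hx
    rw [interior_Ioc] at hx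
    rw [(myF2_hasDeriv hx.1).deriv]
    have := my_h3_pos hx.1 hx.2
    exact mul_pos (div_pos (by norm_num) hx.1) this
  have h1 : myF2 1 = 0 := by simp [myF2]
  rcases lt_or_eq_of_le ht1 with h | h
  · have := hmono (Set.mem_Ioc.mpr ⟨ht, ht1⟩) (Set.mem_Ioc.mpr ⟨one_pos, le_rfl⟩) h
    linarith
  · rw [h, h1]

lemma myF1_nonneg {t : ℝ} (ht : 0 < t) (ht1 : t ≤ 1) : 0 ≤ myF1 t := by
  have hanti : StrictAntiOn myF1 (Set.Ioc 0 1) := by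
    apply strictAntiOn_of_deriv_neg (convex_Ioc 0 1) myF1_contOn
    intro x hx
    rw [interior_Ioc] at hx
    rw [(myF1_hasDeriv hx.1).deriv]
    have hneg : myF2 x < 0 := by
      have hmono : StrictMonoOn myF2 (Set.Ioc 0 1) := by
        apply strictMonoOn_of_deriv_pos (convex_Ioc 0 1) myF2_contOn
        intro y hy
        rw [interior_Ioc] at hy
        rw [(myF2_hasDeriv hy.1).deriv]
        have := my_h3_pos hy.1 hy.2
        exact mul_pos (div_pos (by norm_num) hy.1) this
      have h1 : myF2 1 = 0 := by simp [myF2]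
      have := hmono (Set.mem_Ioc.mpr ⟨hx.1, hx.2.le⟩) (Set.mem_Ioc.mpr ⟨one_pos, le_rfl⟩) hx.2
      linarith
    nlinarith [hx.1]
  have h1 : myF1 1 = 0 := by simp [myF1]
  rcases lt_or_eq_of_le ht1 with h | h
  · have := hanti (Set.mem_Ioc.mpr ⟨ht, ht1⟩) (Set.mem_Ioc.mpr ⟨one_pos, le_rfl⟩) h
    linarith
  · rw [h, h1]

/-- Positivity of the `d = 6` Green's function on the Rindler horizon: for all `χ > 0`,
`2 + coth² χ + 3 cosh χ · ln(sinh χ/(1+cosh χ)) ≥ 0`; equivalently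
`G(χ) = (1/(4π²l²))(2 + coth² χ + 3 cosh χ · ln(sinh χ/(1+cosh χ)))` is nonnegative on
`(0,∞)` for any `l > 0`. -/
theorem greens_function_d6_nonneg :
    ∀ χ : ℝ, 0 < χ →
      (0 ≤ 2 + (Real.cosh χ / Real.sinh χ) ^ 2 +
        3 * Real.cosh χ * Real.log (Real.sinh χ / (1 + Real.cosh χ))) ∧
      ∀ l : ℝ, 0 < l →
        0 ≤ (1 / (4 * π ^ 2 * l ^ 2)) *
          (2 + (Real.cosh χ / Real.sinh χ) ^ 2 +
            3 * Real.cosh χ * Real.log (Real.sinh χ / (1 + Real.cosh χ))) := by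
  intro χ hχ
  have main : 0 ≤ 2 + (Real.cosh χ / Real.sinh χ) ^ 2 +
      3 * Real.cosh χ * Real.log (Real.sinh χ / (1 + Real.cosh χ)) := by
    set s := Real.sinh χ with hs_def
    set c := Real.cosh χ with hc_def
    have hs : 0 < s := Real.sinh_pos_iff.mpr hχ
    have hc1 : 1 ≤ c := Real.one_le_cosh χ
    have hcs : c ^ 2 = 1 + s ^ 2 := Real.cosh_sq' χ
    have hsc : s < c := by nlinarith
    have h1c : (0:ℝ) < 1 + c := by linarith
    set u := s / (1 + c) with hu_def
    have hu0 : 0 < u := div_pos hs h1c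
    have hu1 : u < 1 := (div_lt_one h1c).mpr (by linarith)
    have hus : u * (1 + c) = s := div_mul_cancel₀ s h1c.ne'
    have r1 : u ^ 2 * (1 + c) = c - 1 := by
      have h2 : u ^ 2 * (1 + c) * (1 + c) = (c - 1) * (1 + c) := by
        linear_combination (u * (1 + c) + s) * hus - hcs
      exact mul_right_cancel₀ h1c.ne' h2
    set L := Real.log u with hL_def
    have hh : 0 ≤ (1 - u ^ 2) * (u ^ 4 + 10 * u ^ 2 + 1) + 12 * u ^ 2 * (1 + u ^ 2) * L :=
      myF1_nonneg hu0 hu1.le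
    have key : (2 * s ^ 2 + c ^ 2 + 3 * c * s ^ 2 * L) * 8 =
        ((1 - u ^ 2) * (u ^ 4 + 10 * u ^ 2 + 1) + 12 * u ^ 2 * (1 + u ^ 2) * L) * (1 + c) ^ 3 := by
      linear_combination (-(16 + 24 * c * L) * (s + u * (1 + c))) * hus +
        (u ^ 4 * c ^ 2 + 2 * u ^ 4 * c + u ^ 4 - 12 * u ^ 2 * c ^ 2 * L + 10 * u ^ 2 * c ^ 2
          - 24 * u ^ 2 * c * L + 18 * u ^ 2 * c - 12 * u ^ 2 * L + 8 * u ^ 2 + c ^ 2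
          - 4 * c - 1) * r1
    have hkey2 : 0 ≤ 2 * s ^ 2 + c ^ 2 + 3 * c * s ^ 2 * L := by
      nlinarith [pow_pos h1c 3]
    have hrw : (c / s) ^ 2 = c ^ 2 / s ^ 2 := by rw [div_pow]
    rw [hrw]
    have hs2 : 0 < s ^ 2 := by positivity
    rw [show (2 : ℝ) + c ^ 2 / s ^ 2 + 3 * c * L =
        (2 * s ^ 2 + c ^ 2 + 3 * c * s ^ 2 * L) / s ^ 2 by field_simp]
    exact div_nonneg hkey2 hs2.le
  refine ⟨main, fun l hl => ?_⟩
  have hπ : (0:ℝ) < π := Real.pi_pos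
  have : (0:ℝ) < 1 / (4 * π ^ 2 * l ^ 2) := by positivity
  exact mul_nonneg this.le main
end
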